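/- arXiv:2502.11652 — 5 statements merged into one kernel-verified Lean document; each statement's English description precedes it below -/
import Mathlib

section
/- Let N ≥ 1 and m be natural numbers and let a⁰, a¹, …, a^N be real polynomials with deg a^k ≤ m for every 0 ≤ k ≤ N. Let 𝓛 be the differential operator 𝓛u = Σ_{k=0}^{N} a^k · u^{(k)}. Let i, j be natural numbers, let γ₀, …, γ_N and δ₀, …, δ_N be arbitrary real numbers, and set φ_j = Σ_{p=0}^{N} γ_p · T_{j+p} and ψ_i = Σ_{q=0}^{N} δ_q · T_{N+i+q}^{(N)}. If (i : ℤ) − j > N + m or (j : ℤ) − i > 3N + m, then ∫_{−1}^{1} ψ_i(x) · (𝓛φ_j)(x) · (1 − x²)^{N − 1/2} dx = 0. Consequently, the Petrov–Galerkin coefficient matrix A(i,j) = (ψ_i, 𝓛φ_j)_ω with weight ω(x) = (1 − x²)^{N − 1/2} is banded, with lower bandwidth at most N + m and upper bandwidth at most 3N + m. -/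
open Polynomial Finset intervalIntegral Real


lemma pg_J : ∀ (r a : ℕ), r < a → ∫ θ in (0:ℝ)..π, Real.cos θ ^ r * Real.cos (a * θ) = 0 := by
  intro r
  induction r with
  | zero =>
    intro a ha
    have ha' : (a:ℝ) ≠ 0 := by
      have : 0 < a := by omega
      positivity
    simp only [pow_zero, one_mul]
    rw [intervalIntegral.integral_comp_mul_left (fun x => Real.cos x) ha']
    simp [Real.sin_nat_mul_pi]
  | succ r ih =>
    intro a ha
    have h1 : Set.EqOn (fun θ => Real.cos θ ^ (r+1) * Real.cos (a * θ))
        (fun θ => (1/2) * (Real.cos θ ^ r * Real.cos (((a+1:ℕ):ℝ) * θ))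
          + (1/2) * (Real.cos θ ^ r * Real.cos (((a-1:ℕ):ℝ) * θ))) (Set.uIcc 0 π) := by
      intro θ _
      have h1a : 1 ≤ a := by omega
      have hc : ((a-1:ℕ):ℝ) = (a:ℝ) - 1 := by
        push_cast [h1a]
        ring
      simp only
      push_cast
      rw [hc, show ((a:ℝ)+1)*θ = a*θ + θ by ring, show ((a:ℝ)-1)*θ = a*θ - θ by ring,
        Real.cos_add, Real.cos_sub]
      ring
    rw [intervalIntegral.integral_congr h1, intervalIntegral.integral_add
        ((Continuous.intervalIntegrable (by fun_prop)) _ _)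
        ((Continuous.intervalIntegrable (by fun_prop)) _ _),
      intervalIntegral.integral_const_mul, intervalIntegral.integral_const_mul,
      ih (a+1) (by omega), ih (a-1) (by omega)]
    ring

lemma pg_S (r M : ℕ) (h : r + 2 ≤ M) :
    ∫ θ in (0:ℝ)..π, Real.sin (M * θ) * Real.sin θ * Real.cos θ ^ r = 0 := by
  have h1 : Set.EqOn (fun θ => Real.sin (M * θ) * Real.sin θ * Real.cos θ ^ r)
      (fun θ => (1/2) * (Real.cos θ ^ r * Real.cos (((M-1:ℕ):ℝ) * θ))
        - (1/2) * (Real.cos θ ^ r * Real.cos (((M+1:ℕ):ℝ) * θ))) (Set.uIcc 0 π) := by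
    intro θ _
    have h1a : 1 ≤ M := by omega
    have hc : ((M-1:ℕ):ℝ) = (M:ℝ) - 1 := by
      push_cast [h1a]
      ring
    simp only
    push_cast
    rw [hc, show ((M:ℝ)-1)*θ = M*θ - θ by ring, show ((M:ℝ)+1)*θ = M*θ + θ by ring,
      Real.cos_add, Real.cos_sub]
    ring
  rw [intervalIntegral.integral_congr h1, intervalIntegral.integral_sub
      ((Continuous.intervalIntegrable (by fun_prop)) _ _)
      ((Continuous.intervalIntegrable (by fun_prop)) _ _),
    intervalIntegral.integral_const_mul, intervalIntegral.integral_const_mul,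
    pg_J r (M+1) (by omega), pg_J r (M-1) (by omega)]
  ring

lemma pg_expand (G : ℝ → ℝ) (hG : Continuous G) (p : ℝ[X])
    (hv : ∀ r, r ≤ p.natDegree → ∫ θ in (0:ℝ)..π, G θ * Real.cos θ ^ r = 0) :
    ∫ θ in (0:ℝ)..π, G θ * p.eval (Real.cos θ) = 0 := by
  have h1 : Set.EqOn (fun θ => G θ * p.eval (Real.cos θ))
      (fun θ => ∑ r ∈ Finset.range (p.natDegree + 1), p.coeff r * (G θ * Real.cos θ ^ r))
      (Set.uIcc 0 π) := by
    intro θ _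
    simp only
    rw [Polynomial.eval_eq_sum_range, Finset.mul_sum]
    exact Finset.sum_congr rfl fun r _ => by ring
  rw [intervalIntegral.integral_congr h1, intervalIntegral.integral_finset_sum
    (fun r _ => (Continuous.intervalIntegrable (by fun_prop)) _ _)]
  refine Finset.sum_eq_zero fun r hr => ?_
  have hv' := hv r (Nat.lt_succ_iff.mp (Finset.mem_range.mp hr))
  rw [intervalIntegral.integral_const_mul, hv', mul_zero]

lemma pg_subst (f : ℝ → ℝ) (hf : Continuous f) :
    ∫ x in (-1:ℝ)..1, f x = ∫ θ in (0:ℝ)..π, f (Real.cos θ) * Real.sin θ := by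
  have h := intervalIntegral.integral_comp_smul_deriv (a := 0) (b := π)
    (f := Real.cos) (f' := fun θ => -Real.sin θ) (g := f)
    (fun x _ => Real.hasDerivAt_cos x) (Real.continuous_sin.neg.continuousOn) hf
  simp only [Real.cos_zero, Real.cos_pi, Function.comp, smul_eq_mul, neg_mul] at h
  rw [intervalIntegral.integral_neg] at h
  have h2 : ∫ x in (1:ℝ)..(-1), f x = -∫ x in (-1:ℝ)..1, f x := intervalIntegral.integral_symm _ _
  rw [h2] at h
  have h3 : (∫ θ in (0:ℝ)..π, Real.sin θ * f (Real.cos θ))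
      = ∫ θ in (0:ℝ)..π, f (Real.cos θ) * Real.sin θ :=
    intervalIntegral.integral_congr fun θ _ => mul_comm _ _
  linarith [h, h3]

lemma pg_T_natDegree : ∀ n : ℕ, (Chebyshev.T ℝ (n:ℤ)).natDegree ≤ n := by
  intro n
  induction n using Nat.strong_induction_on with
  | _ n ih =>
    match n with
    | 0 => simp [Chebyshev.T_zero]
    | 1 => simp [Chebyshev.T_one]
    | (k+2) =>
      have h : Chebyshev.T ℝ ((k+2:ℕ):ℤ) = 2 * X * Chebyshev.T ℝ ((k+1:ℕ):ℤ)
          - Chebyshev.T ℝ ((k:ℕ):ℤ) := by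
        have := Chebyshev.T_add_two ℝ (k:ℤ)
        push_cast
        push_cast at this
        exact this
      rw [h]
      refine le_trans (natDegree_sub_le _ _) (max_le ?_ ?_)
      · refine le_trans (natDegree_mul_le) ?_
        have h2 : (2 * X : ℝ[X]).natDegree ≤ 1 := by
          refine le_trans natDegree_mul_le ?_
          simp
        have h3 := ih (k+1) (by omega)
        omega
      · exact le_trans (ih k (by omega)) (by omega)

lemma pg_iter_natDegree (k : ℕ) (p : ℝ[X]) :
    (derivative^[k] p).natDegree ≤ p.natDegree - k := by
  induction k generalizing p with
  | zero => simp
  | succ k ih =>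
    rw [Function.iterate_succ_apply]
    refine le_trans (ih _) ?_
    have := natDegree_derivative_le p
    omega

noncomputable def pgAnti (g : ℝ[X]) : ℝ[X] := g.sum fun n c => C (c / (n+1)) * X^(n+1)

lemma pgAnti_deriv (g : ℝ[X]) : derivative (pgAnti g) = g := by
  unfold pgAnti Polynomial.sum
  rw [map_sum]
  have h : ∀ n ∈ g.support, derivative (C (g.coeff n / (n+1)) * X^(n+1))
      = C (g.coeff n) * X^n := by
    intro n _
    rw [derivative_C_mul, derivative_X_pow, Nat.add_sub_cancel, ← mul_assoc, ← C_mul]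
    congr 1
    have hne : ((n:ℝ)+1) ≠ 0 := by positivity
    push_cast
    field_simp
  rw [Finset.sum_congr rfl h]
  conv_rhs => rw [← Polynomial.sum_C_mul_X_pow_eq g]
  rfl

lemma pgAnti_natDegree (g : ℝ[X]) : (pgAnti g).natDegree ≤ g.natDegree + 1 := by
  unfold pgAnti Polynomial.sum
  refine natDegree_sum_le_of_forall_le _ _ fun n hn => ?_
  refine le_trans (natDegree_C_mul_le _ _) ?_
  refine le_trans (natDegree_X_pow_le _) ?_
  have := Polynomial.le_natDegree_of_mem_supp n hn
  omega

lemma pg_ode (M : ℤ) : (1 - X^2) * derivative (derivative (Chebyshev.T ℝ M))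
    = X * derivative (Chebyshev.T ℝ M) - C ((M:ℝ)^2) * Chebyshev.T ℝ M := by
  have h1 := Chebyshev.add_one_mul_T_eq_poly_in_U (R := ℝ) (M-1)
  have h2 := Chebyshev.T_derivative_eq_U (R := ℝ) M
  have h3 : derivative (derivative (Chebyshev.T ℝ M))
      = (M : ℝ[X]) * derivative (Chebyshev.U ℝ (M-1)) := by
    rw [h2, derivative_mul]
    simp
  have hC : (C ((M:ℝ)^2) : ℝ[X]) = (M : ℝ[X]) * (M : ℝ[X]) := by
    rw [pow_two, C_mul]
    norm_cast
    simp [C_eq_intCast]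
  rw [hC, h3, h2]
  simp only [sub_add_cancel] at h1
  push_cast at h1
  linear_combination (M : ℝ[X]) * h1

lemma pg_ode_iter (M : ℤ) (p : ℕ) :
    (1 - X^2) * derivative (derivative (derivative^[p] (Chebyshev.T ℝ M)))
      = C ((2*(p:ℝ)+1)) * (X * derivative (derivative^[p] (Chebyshev.T ℝ M)))
        - C ((M:ℝ)^2 - (p:ℝ)^2) * derivative^[p] (Chebyshev.T ℝ M) := by
  induction p with
  | zero =>
    simpa using pg_ode M
  | succ p ih =>
    rw [Function.iterate_succ_apply' derivative p]
    have h := congrArg derivative ih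
    simp only [derivative_mul, derivative_sub, derivative_one, derivative_X_pow, derivative_X,
      derivative_C, zero_mul, zero_sub, mul_one, one_mul] at h
    have hC1 : (C (2*((p:ℝ)+1)+1) : ℝ[X]) = C (2*(p:ℝ)+1) + C 2 := by
      rw [← C_add]; ring_nf
    have hC2 : (C ((M:ℝ)^2 - ((p:ℝ)+1)^2) : ℝ[X])
        = C ((M:ℝ)^2 - (p:ℝ)^2) - C (2*(p:ℝ)+1) := by
      rw [← C_sub]; ring_nf
    push_cast
    rw [hC1, hC2]
    linear_combination h

lemma pg_rpow_eq (c : ℕ) {t : ℝ} (ht : 0 ≤ t) :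
    t ^ ((c:ℝ) + 1/2) = t^c * Real.sqrt t := by
  rcases eq_or_lt_of_le ht with h | h
  · rw [← h, Real.zero_rpow (by positivity), Real.sqrt_zero, mul_zero]
  · rw [Real.rpow_add h, Real.rpow_natCast, Real.sqrt_eq_rpow]

lemma pg_B0 (c M : ℕ) (g : ℝ[X]) (hd : g.natDegree + 2*c + 2 < M) :
    ∫ x in (-1:ℝ)..1, (Chebyshev.T ℝ (M:ℤ)).eval x * g.eval x
      * ((1-x^2)^c * Real.sqrt (1-x^2)) = 0 := by
  rw [pg_subst _ (by fun_prop)]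
  have key : Set.EqOn
      (fun θ => ((Chebyshev.T ℝ (M:ℤ)).eval (Real.cos θ) * g.eval (Real.cos θ)
        * ((1-Real.cos θ^2)^c * Real.sqrt (1-Real.cos θ^2))) * Real.sin θ)
      (fun θ => Real.cos ((M:ℝ) * θ) * (g * (1 - X^2)^(c+1)).eval (Real.cos θ))
      (Set.uIcc 0 π) := by
    intro θ hθ
    rw [Set.uIcc_of_le Real.pi_pos.le] at hθ
    have hsin : 0 ≤ Real.sin θ := Real.sin_nonneg_of_nonneg_of_le_pi hθ.1 hθ.2
    have h2 : (1 : ℝ) - Real.cos θ^2 = Real.sin θ^2 := by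
      have := Real.sin_sq_add_cos_sq θ; linarith
    simp only [Chebyshev.T_real_cos, eval_mul, eval_pow, eval_sub, eval_one, eval_X]
    rw [h2, Real.sqrt_sq hsin]
    push_cast
    ring
  rw [intervalIntegral.integral_congr key]
  refine pg_expand _ (by fun_prop) _ fun r hr => ?_
  have hcomm : (fun θ => Real.cos ((M:ℝ)*θ) * Real.cos θ ^ r)
      = fun θ => Real.cos θ ^ r * Real.cos ((M:ℝ)*θ) := funext fun θ => mul_comm _ _
  rw [hcomm]
  refine pg_J r M ?_
  have h1 : (g * (1 - X^2)^(c+1)).natDegree ≤ g.natDegree + 2*(c+1) := by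
    refine le_trans natDegree_mul_le ?_
    have h2 : ((1 - X^2 : ℝ[X])^(c+1)).natDegree ≤ (c+1) * 2 := by
      refine le_trans natDegree_pow_le ?_
      have h3 : (1 - X^2 : ℝ[X]).natDegree ≤ 2 := by
        refine le_trans (natDegree_sub_le _ _) ?_
        simp
      exact Nat.mul_le_mul_left _ h3
    omega
  omega

lemma pg_B1 (M : ℕ) (g : ℝ[X]) (hd : g.natDegree + 2 ≤ M) :
    ∫ x in (-1:ℝ)..1, (derivative (Chebyshev.T ℝ (M:ℤ))).eval x * g.eval x
      * Real.sqrt (1-x^2) = 0 := by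
  rw [pg_subst _ (by fun_prop)]
  have key : Set.EqOn
      (fun θ => ((derivative (Chebyshev.T ℝ (M:ℤ))).eval (Real.cos θ) * g.eval (Real.cos θ)
        * Real.sqrt (1-Real.cos θ^2)) * Real.sin θ)
      (fun θ => ((M:ℝ) * Real.sin ((M:ℝ) * θ) * Real.sin θ) * g.eval (Real.cos θ))
      (Set.uIcc 0 π) := by
    intro θ hθ
    rw [Set.uIcc_of_le Real.pi_pos.le] at hθ
    have hsin : 0 ≤ Real.sin θ := Real.sin_nonneg_of_nonneg_of_le_pi hθ.1 hθ.2
    have h2 : (1:ℝ) - Real.cos θ^2 = Real.sin θ^2 := by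
      have := Real.sin_sq_add_cos_sq θ; linarith
    have hU : (Chebyshev.U ℝ ((M:ℤ)-1)).eval (Real.cos θ) * Real.sin θ
        = Real.sin ((M:ℝ) * θ) := by
      have h3 := Chebyshev.U_real_cos θ ((M:ℤ)-1)
      push_cast at h3
      rw [h3]
      norm_num
    simp only [Chebyshev.T_derivative_eq_U, eval_mul, eval_intCast]
    rw [h2, Real.sqrt_sq hsin]
    push_cast
    linear_combination ((M:ℝ) * g.eval (Real.cos θ) * Real.sin θ) * hU
  rw [intervalIntegral.integral_congr key]
  refine pg_expand _ (by fun_prop) g fun r hr => ?_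
  have hrw : (fun θ => ((M:ℝ) * Real.sin ((M:ℝ) * θ) * Real.sin θ) * Real.cos θ ^ r)
      = fun θ => (M:ℝ) * (Real.sin ((M:ℝ) * θ) * Real.sin θ * Real.cos θ ^ r) :=
    funext fun θ => by ring
  rw [hrw, intervalIntegral.integral_const_mul, pg_S r M (by omega), mul_zero]

lemma pg_chain : ∀ (k : ℕ) (M : ℕ) (g : ℝ[X]), g.natDegree + k + 2 ≤ M →
    ∫ x in (-1:ℝ)..1, (derivative^[k+1] (Chebyshev.T ℝ (M:ℤ))).eval x * g.eval x
      * ((1-x^2)^k * Real.sqrt (1-x^2)) = 0 := by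
  intro k
  induction k with
  | zero =>
    intro M g hd
    have h := pg_B1 M g (by omega)
    have : (fun x : ℝ => (derivative^[1] (Chebyshev.T ℝ (M:ℤ))).eval x * g.eval x
        * ((1-x^2)^0 * Real.sqrt (1-x^2)))
        = fun x : ℝ => (derivative (Chebyshev.T ℝ (M:ℤ))).eval x * g.eval x
        * Real.sqrt (1-x^2) := by
      funext x
      simp
    rw [this, h]
  | succ k ih =>
    intro M g hd
    have hdh : (pgAnti g).natDegree + k + 2 ≤ M := by
      have := pgAnti_natDegree g; omega
    have hih := ih M (pgAnti g) hdh
    rw [Function.iterate_succ_apply' derivative (k+1)]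
    -- notation
    set y : ℝ[X] := derivative^[k+1] (Chebyshev.T ℝ (M:ℤ)) with hy
    set hpol : ℝ[X] := pgAnti g with hhp
    set c : ℝ := ((k:ℝ) + 1) + 1/2 with hc
    have hc1 : (1:ℝ) ≤ c := by
      rw [hc]
      have : (0:ℝ) ≤ (k:ℝ) := Nat.cast_nonneg k
      linarith
    have hcne : c ≠ 0 := by
      have : (0:ℝ) ≤ (k:ℝ) := Nat.cast_nonneg k
      rw [hc]; intro hcontra; linarith
    -- FTC
    have hF : ∀ x ∈ Set.uIcc (-1:ℝ) 1,
        HasDerivAt (fun x : ℝ => (1-x^2) ^ c * ((derivative y) * hpol).eval x)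
        ((c * ((1-x^2)^k * Real.sqrt (1-x^2)) * (-2*x)) * ((derivative y) * hpol).eval x
          + ((1-x^2)^(k+1) * Real.sqrt (1-x^2))
            * (derivative ((derivative y) * hpol)).eval x) x := by
      intro x hx
      rw [Set.uIcc_of_le (by norm_num : (-1:ℝ) ≤ 1)] at hx
      have hx2 : (0:ℝ) ≤ 1 - x^2 := by nlinarith [hx.1, hx.2]
      have h1 : HasDerivAt (fun x : ℝ => 1 - x^2) (-2*x) x := by
        simpa using ((hasDerivAt_pow 2 x).const_sub 1)
      have h2 : HasDerivAt (fun y : ℝ => y ^ c) (c * (1-x^2) ^ (c-1)) (1-x^2) :=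
        Real.hasDerivAt_rpow_const (Or.inr hc1)
      have h4 := (h2.comp x h1).mul (Polynomial.hasDerivAt ((derivative y) * hpol) x)
      simp only [Function.comp_apply] at h4
      convert h4 using 1
      case e'_4 => rfl
      case e'_5 => rfl
      case e'_8 => rfl
      have e1 : (1-x^2 : ℝ) ^ (c - 1) = (1-x^2)^k * Real.sqrt (1-x^2) := by
        have he : c - 1 = (k:ℝ) + 1/2 := by rw [hc]; ring
        rw [he, pg_rpow_eq k hx2]
      have e2 : (1-x^2 : ℝ) ^ c = (1-x^2)^(k+1) * Real.sqrt (1-x^2) := by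
        have he : c = ((k+1:ℕ):ℝ) + 1/2 := by rw [hc]; push_cast; ring
        rw [he, pg_rpow_eq (k+1) hx2]
      rw [e1, e2]
      try ring
    have hG : Continuous fun x : ℝ =>
        (c * ((1-x^2)^k * Real.sqrt (1-x^2)) * (-2*x)) * ((derivative y) * hpol).eval x
          + ((1-x^2)^(k+1) * Real.sqrt (1-x^2))
            * (derivative ((derivative y) * hpol)).eval x := by fun_prop
    have hFTC := intervalIntegral.integral_eq_sub_of_hasDerivAt hF
      (hG.intervalIntegrable _ _)
    have hzero : ∫ x in (-1:ℝ)..1,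
        ((c * ((1-x^2)^k * Real.sqrt (1-x^2)) * (-2*x)) * ((derivative y) * hpol).eval x
          + ((1-x^2)^(k+1) * Real.sqrt (1-x^2))
            * (derivative ((derivative y) * hpol)).eval x) = 0 := by
      rw [hFTC]
      norm_num
      rw [Real.zero_rpow hcne]
      ring
    -- pointwise identity
    have hptw : ∀ x : ℝ,
        (c * ((1-x^2)^k * Real.sqrt (1-x^2)) * (-2*x)) * ((derivative y) * hpol).eval x
          + ((1-x^2)^(k+1) * Real.sqrt (1-x^2))
            * (derivative ((derivative y) * hpol)).eval x
        = (-((M:ℝ)^2 - ((k:ℝ)+1)^2))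
            * (y.eval x * hpol.eval x * ((1-x^2)^k * Real.sqrt (1-x^2)))
          + (derivative y).eval x * g.eval x * ((1-x^2)^(k+1) * Real.sqrt (1-x^2)) := by
      intro x
      have hode := congrArg (eval x) (pg_ode_iter ((M:ℕ):ℤ) (k+1))
      rw [← hy] at hode
      simp only [eval_mul, eval_sub, eval_one, eval_pow, eval_X, eval_C, eval_add] at hode
      push_cast at hode
      have hdP : derivative ((derivative y) * hpol)
          = derivative (derivative y) * hpol + derivative y * g := by
        rw [derivative_mul, hhp, pgAnti_deriv]
      rw [hdP, hc]
      simp only [eval_mul, eval_add]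
      linear_combination (hpol.eval x * ((1-x^2)^k * Real.sqrt (1-x^2))) * hode
    have hsplit : (∫ x in (-1:ℝ)..1,
        ((c * ((1-x^2)^k * Real.sqrt (1-x^2)) * (-2*x)) * ((derivative y) * hpol).eval x
          + ((1-x^2)^(k+1) * Real.sqrt (1-x^2))
            * (derivative ((derivative y) * hpol)).eval x))
        = (-((M:ℝ)^2 - ((k:ℝ)+1)^2))
            * (∫ x in (-1:ℝ)..1, y.eval x * hpol.eval x * ((1-x^2)^k * Real.sqrt (1-x^2)))
          + ∫ x in (-1:ℝ)..1,
              (derivative y).eval x * g.eval x * ((1-x^2)^(k+1) * Real.sqrt (1-x^2)) := by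
      rw [← intervalIntegral.integral_const_mul,
        ← intervalIntegral.integral_add
          ((Continuous.intervalIntegrable (by fun_prop)) _ _)
          ((Continuous.intervalIntegrable (by fun_prop)) _ _)]
      exact intervalIntegral.integral_congr fun x _ => hptw x
    rw [hsplit, hih] at hzero
    linarith

lemma pg_iter_deriv_smul (k : ℕ) (c : ℝ) (p : ℝ[X]) :
    derivative^[k] (c • p) = c • derivative^[k] p := by
  induction k generalizing p with
  | zero => simp
  | succ k ih => rw [Function.iterate_succ_apply, Function.iterate_succ_apply,
      derivative_smul, ih]

lemma pg_iter_deriv_sum {ι : Type*} (s : Finset ι) (f : ι → ℝ[X]) (k : ℕ) :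
    derivative^[k] (∑ a ∈ s, f a) = ∑ a ∈ s, derivative^[k] (f a) := by
  induction k with
  | zero => simp
  | succ k ih => rw [Function.iterate_succ_apply', ih, derivative_sum,
      Finset.sum_congr rfl fun a _ => (Function.iterate_succ_apply' derivative k (f a)).symm]

lemma pg_integral_sum_zero {ι : Type*} (s : Finset ι) (f : ι → ℝ → ℝ)
    (hcont : ∀ a ∈ s, Continuous (f a))
    (hz : ∀ a ∈ s, ∫ x in (-1:ℝ)..1, f a x = 0) :
    ∫ x in (-1:ℝ)..1, (∑ a ∈ s, f a x) = 0 := by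
  rw [intervalIntegral.integral_finset_sum
    (fun a ha => (hcont a ha).intervalIntegrable _ _)]
  exact Finset.sum_eq_zero hz

/-- The Petrov–Galerkin coefficient matrix `A(i,j) = (ψ_i, 𝓛 φ_j)_ω` with the
ultraspherical weight `ω(x) = (1 - x²)^(N - 1/2)` is banded: the entry vanishes
whenever `i - j > N + m` or `j - i > 3N + m`. -/
theorem pg_coefficient_matrix_banded
    (N m : ℕ) (hN : 1 ≤ N) (a : Fin (N + 1) → ℝ[X])
    (ha : ∀ k, (a k).degree ≤ (m : ℕ)) (i j : ℕ)
    (γ δ : Fin (N + 1) → ℝ) (φ ψ : ℝ[X])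
    (hφ : φ = ∑ p : Fin (N + 1), γ p • Polynomial.Chebyshev.T ℝ ((j : ℤ) + (p : ℕ)))
    (hψ : ψ = ∑ q : Fin (N + 1),
      δ q • derivative^[N] (Polynomial.Chebyshev.T ℝ ((N : ℤ) + (i : ℕ) + (q : ℕ))))
    (hij : (i : ℤ) - (j : ℤ) > (N : ℤ) + m ∨ (j : ℤ) - (i : ℤ) > 3 * (N : ℤ) + m) :
    ∫ x in (-1 : ℝ)..1,
      ψ.eval x * (∑ k : Fin (N + 1), a k * derivative^[(k : ℕ)] φ).eval x *
        (1 - x ^ 2) ^ ((N : ℝ) - 1 / 2) = 0 := by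
  -- normalize indices
  have hidx1 : ∀ p : Fin (N+1), ((j:ℤ) + ((p:ℕ):ℤ)) = (((j + (p:ℕ)):ℕ):ℤ) := by
    intro p; push_cast; ring
  have hidx2 : ∀ q : Fin (N+1),
      ((N:ℤ) + ((i:ℕ):ℤ) + ((q:ℕ):ℤ)) = (((N + i + (q:ℕ)):ℕ):ℤ) := by
    intro q; push_cast; ring
  simp only [hidx1] at hφ
  simp only [hidx2] at hψ
  obtain ⟨N', rfl⟩ : ∃ N', N = N'+1 := ⟨N-1, by omega⟩
  -- degree bounds
  have hadeg : ∀ k, (a k).natDegree ≤ m := fun k => natDegree_le_iff_degree_le.mpr (ha k)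
  have hφdeg : φ.natDegree ≤ j + (N'+1) := by
    rw [hφ]
    refine natDegree_sum_le_of_forall_le _ _ fun p _ => ?_
    refine le_trans (natDegree_smul_le _ _) ?_
    refine le_trans (pg_T_natDegree _) ?_
    have := p.is_le
    omega
  have hψdeg : ψ.natDegree ≤ i + (N'+1) := by
    rw [hψ]
    refine natDegree_sum_le_of_forall_le _ _ fun q _ => ?_
    refine le_trans (natDegree_smul_le _ _) ?_
    have h1 := pg_iter_natDegree (N'+1) (Chebyshev.T ℝ (((N'+1 + i + (q:ℕ)):ℕ):ℤ))
    have h2 := pg_T_natDegree (N'+1 + i + (q:ℕ))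
    have := q.is_le
    omega
  have hLdeg : (∑ k : Fin (N'+1+1), a k * derivative^[(k:ℕ)] φ).natDegree
      ≤ j + (N'+1) + m := by
    refine natDegree_sum_le_of_forall_le _ _ fun k _ => ?_
    refine le_trans natDegree_mul_le ?_
    have h1 := pg_iter_natDegree (k:ℕ) φ
    have h2 := hadeg k
    omega
  -- weight rewrite
  have hw : Set.EqOn
      (fun x : ℝ => ψ.eval x * (∑ k : Fin (N'+1+1), a k * derivative^[(k:ℕ)] φ).eval x
        * (1 - x^2) ^ ((((N'+1:ℕ)):ℝ) - 1/2))
      (fun x : ℝ => ψ.eval x * (∑ k : Fin (N'+1+1), a k * derivative^[(k:ℕ)] φ).eval x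
        * ((1-x^2)^N' * Real.sqrt (1-x^2))) (Set.uIcc (-1) 1) := by
    intro x hx
    rw [Set.uIcc_of_le (by norm_num : (-1:ℝ) ≤ 1)] at hx
    have hx2 : (0:ℝ) ≤ 1 - x^2 := by nlinarith [hx.1, hx.2]
    simp only
    have he : (((N'+1:ℕ)):ℝ) - 1/2 = ((N':ℕ):ℝ) + 1/2 := by push_cast; ring
    rw [he, pg_rpow_eq N' hx2]
  rw [intervalIntegral.integral_congr hw]
  rcases hij with hcase | hcase
  · -- Case 1 : i large
    have hi : j + N' + m + 2 ≤ i := by omega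
    have hptw : Set.EqOn
        (fun x : ℝ => ψ.eval x * (∑ k : Fin (N'+1+1), a k * derivative^[(k:ℕ)] φ).eval x
          * ((1-x^2)^N' * Real.sqrt (1-x^2)))
        (fun x : ℝ => ∑ q : Fin (N'+1+1), δ q *
          ((derivative^[N'+1] (Chebyshev.T ℝ (((N'+1 + i + (q:ℕ)):ℕ):ℤ))).eval x
            * (∑ k : Fin (N'+1+1), a k * derivative^[(k:ℕ)] φ).eval x
            * ((1-x^2)^N' * Real.sqrt (1-x^2)))) (Set.uIcc (-1) 1) := by
      intro x _
      simp only [hψ, eval_finset_sum, eval_smul, smul_eq_mul]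
      rw [Finset.sum_mul, Finset.sum_mul]
      exact Finset.sum_congr rfl fun q _ => by ring
    rw [intervalIntegral.integral_congr hptw]
    refine pg_integral_sum_zero _ _ (fun q _ => by fun_prop) fun q _ => ?_
    rw [intervalIntegral.integral_const_mul,
      pg_chain N' (N'+1 + i + (q:ℕ)) _ (by omega), mul_zero]
  · -- Case 2 : j large
    have hj : i + 3*N' + m + 4 ≤ j := by omega
    have hφiter : ∀ k : Fin (N'+1+1), derivative^[(k:ℕ)] φ
        = ∑ p : Fin (N'+1+1), γ p • derivative^[(k:ℕ)]
            (Chebyshev.T ℝ (((j + (p:ℕ)):ℕ):ℤ)) := by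
      intro k
      rw [hφ, pg_iter_deriv_sum]
      exact Finset.sum_congr rfl fun p _ => pg_iter_deriv_smul _ _ _
    have hptw : Set.EqOn
        (fun x : ℝ => ψ.eval x * (∑ k : Fin (N'+1+1), a k * derivative^[(k:ℕ)] φ).eval x
          * ((1-x^2)^N' * Real.sqrt (1-x^2)))
        (fun x : ℝ => ∑ k : Fin (N'+1+1), ∑ p : Fin (N'+1+1), γ p *
          ((derivative^[(k:ℕ)] (Chebyshev.T ℝ (((j + (p:ℕ)):ℕ):ℤ))).eval x
            * (ψ * a k).eval x * ((1-x^2)^N' * Real.sqrt (1-x^2))))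
        (Set.uIcc (-1) 1) := by
      intro x _
      simp only
      have h1 : eval x (∑ k : Fin (N'+1+1), a k * derivative^[(k:ℕ)] φ)
          = ∑ k : Fin (N'+1+1), ∑ p : Fin (N'+1+1), γ p *
              ((a k).eval x * (derivative^[(k:ℕ)]
                (Chebyshev.T ℝ (((j + (p:ℕ)):ℕ):ℤ))).eval x) := by
        rw [eval_finset_sum]
        refine Finset.sum_congr rfl fun k _ => ?_
        rw [eval_mul, hφiter k, eval_finset_sum, Finset.mul_sum]
        refine Finset.sum_congr rfl fun p _ => ?_
        rw [eval_smul, smul_eq_mul]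
        ring
      rw [h1, Finset.mul_sum, Finset.sum_mul]
      refine Finset.sum_congr rfl fun k _ => ?_
      rw [Finset.mul_sum, Finset.sum_mul]
      refine Finset.sum_congr rfl fun p _ => ?_
      rw [eval_mul]
      ring
    rw [intervalIntegral.integral_congr hptw]
    refine pg_integral_sum_zero _ _
      (fun k _ => continuous_finset_sum _ fun p _ => by fun_prop) fun k _ => ?_
    refine pg_integral_sum_zero _ _ (fun p _ => by fun_prop) fun p _ => ?_
    rw [intervalIntegral.integral_const_mul]
    have hgd : (ψ * a k).natDegree ≤ i + N' + 1 + m :=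
      le_trans natDegree_mul_le (by have := hadeg k; omega)
    rcases Nat.eq_zero_or_pos (k:ℕ) with hk0 | hkpos
    · rw [hk0]
      simp only [Function.iterate_zero, id_eq]
      rw [pg_B0 N' (j + (p:ℕ)) (ψ * a k) (by omega), mul_zero]
    · obtain ⟨k'', hk⟩ : ∃ k'', (k:ℕ) = k''+1 := ⟨(k:ℕ)-1, by omega⟩
      have hk2 : k'' ≤ N' := by have := k.is_le; omega
      rw [hk]
      have hwt : Set.EqOn
          (fun x : ℝ => (derivative^[k''+1] (Chebyshev.T ℝ (((j + (p:ℕ)):ℕ):ℤ))).eval x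
            * (ψ * a k).eval x * ((1-x^2)^N' * Real.sqrt (1-x^2)))
          (fun x : ℝ => (derivative^[k''+1] (Chebyshev.T ℝ (((j + (p:ℕ)):ℕ):ℤ))).eval x
            * (ψ * a k * (1 - X^2)^(N'-k'')).eval x
            * ((1-x^2)^k'' * Real.sqrt (1-x^2))) (Set.uIcc (-1) 1) := by
        intro x _
        simp only [eval_mul, eval_pow, eval_sub, eval_one, eval_X]
        have hpow : (1-x^2 : ℝ)^(N'-k'') * (1-x^2)^k'' = (1-x^2)^N' := by
          rw [← pow_add]; congr 1; omega
        linear_combination (-(eval x (derivative^[k''+1]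
          (Chebyshev.T ℝ (((j + (p:ℕ)):ℕ):ℤ))) * eval x ψ * eval x (a k)
            * Real.sqrt (1-x^2))) * hpow
      rw [intervalIntegral.integral_congr hwt]
      have hgd2 : (ψ * a k * (1 - X^2)^(N'-k'')).natDegree + k'' + 2 ≤ j + (p:ℕ) := by
        have h3 : ((1 - X^2 : ℝ[X])^(N'-k'')).natDegree ≤ (N'-k'') * 2 := by
          refine le_trans natDegree_pow_le ?_
          have : (1 - X^2 : ℝ[X]).natDegree ≤ 2 := by
            refine le_trans (natDegree_sub_le _ _) ?_
            simp
          exact Nat.mul_le_mul_left _ this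
        have h4 := natDegree_mul_le (p := ψ * a k) (q := (1 - X^2 : ℝ[X])^(N'-k''))
        omega
      rw [pg_chain k'' (j + (p:ℕ)) _ hgd2, mul_zero]
end

section
/- Let N ≥ 1 and m be natural numbers and let a⁰, …, a^N be real polynomials with deg a^k ≤ m for every 0 ≤ k ≤ N, and let 𝓛 be the differential operator 𝓛u = Σ_{k=0}^{N} a^k · u^{(k)}. Then for all natural numbers i, j with (i : ℤ) > j + m or (i : ℤ) < j − 2N − m, one has ∫_{−1}^{1} (𝓛T_j)(x) · T_{N+i}^{(N)}(x) · (1 − x²)^{N − 1/2} dx = 0. (This expresses that the ultraspherical-coefficient representation L of 𝓛, whose (i,j) entry is proportional to this weighted integral, is a banded matrix.) -/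
open Polynomial Finset

section Aux

open Polynomial.Chebyshev MeasureTheory intervalIntegral Set

/-- The weighted integral functional `J e P = ∫_{-1}^1 P(x) (1-x²)^e dx`. -/
noncomputable def bandedJ (e : ℝ) (P : ℝ[X]) : ℝ :=
  ∫ x in (-1:ℝ)..1, P.eval x * (1 - x^2) ^ e

local notation "J" => bandedJ

lemma banded_contw {e : ℝ} (he : 0 ≤ e) : Continuous fun x : ℝ => (1 - x^2) ^ e :=
  (Real.continuous_rpow_const he).comp (continuous_const.sub (continuous_pow 2))

lemma banded_intJ {e : ℝ} (he : 0 ≤ e) (P : ℝ[X]) :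
    IntervalIntegrable (fun x => P.eval x * (1 - x^2) ^ e) volume (-1) 1 :=
  (P.continuous_aeval.mul (banded_contw he)).intervalIntegrable _ _

lemma banded_J_Dop (e : ℝ) (he : 0 ≤ e) (P : ℝ[X]) :
    J e ((1 - X^2) * derivative P - C (2*(e+1)) * (X * P)) = 0 := by
  have h0 : (0:ℝ) < e + 1 := by linarith
  set Q : ℝ[X] := (1 - X^2) * derivative P - C (2*(e+1)) * (X * P) with hQ
  set f : ℝ → ℝ := fun x => P.eval x * (1 - x^2) ^ (e+1) with hf
  have hcont : ContinuousOn f (Icc (-1:ℝ) 1) :=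
    (P.continuous_aeval.mul (banded_contw h0.le)).continuousOn
  have hderiv : ∀ x ∈ Ioo (-1:ℝ) 1,
      HasDerivAt f (Q.eval x * (1 - x^2) ^ e) x := by
    intro x hx
    have hpos : (0:ℝ) < 1 - x^2 := by nlinarith [hx.1, hx.2]
    have h1 : HasDerivAt (fun y : ℝ => 1 - y^2) (-(2*x)) x := by
      simpa using (hasDerivAt_pow 2 x).const_sub 1
    have h2 := h1.rpow_const (p := e+1) (Or.inl hpos.ne')
    have h3 := (P.hasDerivAt x).mul h2
    refine HasDerivAt.congr_deriv h3 ?_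
    have hre : (1 - x^2) ^ (e + 1) = (1 - x^2)^e * (1 - x^2) := by
      rw [Real.rpow_add hpos, Real.rpow_one]
    simp only [hQ, eval_sub, eval_mul, eval_one, eval_pow, eval_X, eval_C]
    rw [add_sub_cancel_right, hre]
    ring
  have := integral_eq_sub_of_hasDeriv_right_of_le (by norm_num : (-1:ℝ) ≤ 1) hcont
    (fun x hx => (hderiv x hx).hasDerivWithinAt) (banded_intJ he Q)
  have hf1 : f 1 = 0 := by
    simp [hf, show (1:ℝ) - 1^2 = 0 by norm_num, Real.zero_rpow h0.ne']
  have hfm1 : f (-1) = 0 := by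
    simp [hf, show (1:ℝ) - (-1)^2 = 0 by norm_num, Real.zero_rpow h0.ne']
  simpa [bandedJ, hf1, hfm1] using this

lemma banded_J_add {e : ℝ} (he : 0 ≤ e) (P Q : ℝ[X]) : J e (P + Q) = J e P + J e Q := by
  unfold bandedJ
  rw [← intervalIntegral.integral_add (banded_intJ he P) (banded_intJ he Q)]
  simp [add_mul]

lemma banded_J_sub {e : ℝ} (he : 0 ≤ e) (P Q : ℝ[X]) : J e (P - Q) = J e P - J e Q := by
  unfold bandedJ
  rw [← intervalIntegral.integral_sub (banded_intJ he P) (banded_intJ he Q)]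
  simp [sub_mul]

lemma banded_J_smul (e : ℝ) (c : ℝ) (P : ℝ[X]) : J e (C c * P) = c * J e P := by
  unfold bandedJ
  rw [← intervalIntegral.integral_const_mul]
  congr 1; funext x; rw [eval_mul, eval_C]; ring

lemma banded_J_zero (e : ℝ) : J e 0 = 0 := by simp [bandedJ]

lemma banded_J_sum {ι : Type*} {e : ℝ} (he : 0 ≤ e) (s : Finset ι) (P : ι → ℝ[X]) :
    J e (∑ k ∈ s, P k) = ∑ k ∈ s, J e (P k) := by
  unfold bandedJ
  rw [← intervalIntegral.integral_finset_sum (fun k _ => banded_intJ he (P k))]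
  congr 1; funext x; rw [eval_finset_sum, Finset.sum_mul]

lemma banded_J_shift1 {e : ℝ} (he : 0 ≤ e) (P : ℝ[X]) : J e ((1 - X^2) * P) = J (e+1) P := by
  unfold bandedJ
  apply intervalIntegral.integral_congr
  intro x hx
  rw [Set.uIcc_of_le (by norm_num : (-1:ℝ) ≤ 1)] at hx
  have h1 : (0:ℝ) ≤ 1 - x^2 := by nlinarith [hx.1, hx.2]
  simp only [eval_mul, eval_sub, eval_one, eval_pow, eval_X]
  rcases h1.lt_or_eq with h | h
  · rw [Real.rpow_add h, Real.rpow_one]; ring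
  · rw [← h, Real.zero_rpow (by linarith : e + 1 ≠ 0)]
    rcases eq_or_lt_of_le he with he0 | he0
    · rw [← he0]; simp
    · rw [Real.zero_rpow he0.ne']; ring

lemma banded_J_shift_pow {e : ℝ} (he : 0 ≤ e) (d : ℕ) (P : ℝ[X]) :
    J e ((1 - X^2)^d * P) = J (e + d) P := by
  induction d generalizing P with
  | zero => simp
  | succ d ih =>
    have h : (1 - X^2 : ℝ[X])^(d+1) * P = (1 - X^2)^d * ((1 - X^2) * P) := by ring
    rw [h, ih, banded_J_shift1 (by positivity)]
    push_cast; ring_nf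

lemma banded_cheb_ode_base (M : ℤ) :
    (1 - X^2 : ℝ[X]) * derivative (derivative (T ℝ M)) =
      X * derivative (T ℝ M) - ((M:ℝ[X]))^2 * T ℝ M := by
  have h1 := T_derivative_eq_U (R := ℝ) M
  have h2 := add_one_mul_T_eq_poly_in_U (R := ℝ) (M - 1)
  simp only [sub_add_cancel] at h2
  have h3 : derivative ((M : ℝ[X]) * U ℝ (M - 1)) = (M : ℝ[X]) * derivative (U ℝ (M-1)) := by
    rw [derivative_mul]
    simp
  rw [h1, h3]
  have h4 : ((M - 1 : ℤ) : ℝ[X]) + 1 = (M : ℝ[X]) := by push_cast; ring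
  rw [h4] at h2
  linear_combination (M : ℝ[X]) * h2

lemma banded_cheb_ode (M : ℤ) (l : ℕ) :
    (1 - X^2 : ℝ[X]) * derivative^[l+2] (T ℝ M) =
      ((2*(l:ℤ)+1 : ℤ) : ℝ[X]) * (X * derivative^[l+1] (T ℝ M)) -
        ((M^2 - (l:ℤ)^2 : ℤ) : ℝ[X]) * derivative^[l] (T ℝ M) := by
  induction l with
  | zero =>
    simpa using banded_cheb_ode_base M
  | succ l ih =>
    have h := congrArg derivative ih
    simp only [derivative_mul, derivative_sub, derivative_one, derivative_X,
      derivative_X_pow, derivative_intCast, map_ofNat, Nat.cast_ofNat, C_eq_natCast,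
      Function.iterate_succ_apply'] at h ⊢
    push_cast at h ⊢
    linear_combination h

lemma banded_J_step {e : ℝ} (he : 0 ≤ e) (A B : ℝ[X]) :
    J e (A * ((1-X^2) * derivative B - C (2*(e+1)) * (X * B))) = - J (e+1) (derivative A * B) := by
  have hid : (1-X^2 : ℝ[X]) * derivative (A*B) - C (2*(e+1)) * (X*(A*B)) =
      A * ((1-X^2)*derivative B - C (2*(e+1)) * (X*B)) + (1-X^2) * (derivative A * B) := by
    rw [derivative_mul]; ring
  have h0 := banded_J_Dop e he (A*B)
  rw [hid, banded_J_add he, banded_J_shift1 he] at h0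
  linarith

lemma banded_claim_step (q : ℕ) (l : ℕ) (hl : 1 ≤ l) (B : ℝ[X]) :
    ((q:ℝ)^2 - (l:ℝ)^2) * J ((l:ℝ) - 1/2) (B * derivative^[l] (T ℝ (q:ℤ))) =
      J ((l:ℝ) + 1/2) (derivative B * derivative^[l+1] (T ℝ (q:ℤ))) := by
  set e : ℝ := (l:ℝ) - 1/2 with hedef
  have hl1 : (1:ℝ) ≤ (l:ℝ) := by exact_mod_cast hl
  have he : 0 ≤ e := by rw [hedef]; linarith
  have hC : C (2*(e+1)) = ((2*(l:ℤ)+1 : ℤ) : ℝ[X]) := by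
    rw [show 2*(e+1) = ((2*(l:ℤ)+1 : ℤ) : ℝ) by rw [hedef]; push_cast; ring, map_intCast]
  have hrod : (1-X^2 : ℝ[X]) * derivative (derivative^[l+1] (T ℝ (q:ℤ)))
      - C (2*(e+1)) * (X * derivative^[l+1] (T ℝ (q:ℤ)))
      = C (-((q:ℝ)^2 - (l:ℝ)^2)) * derivative^[l] (T ℝ (q:ℤ)) := by
    rw [hC, ← Function.iterate_succ_apply' derivative (l+1)]
    have hC2 : C (-((q:ℝ)^2 - (l:ℝ)^2)) = ((-(((q:ℤ))^2 - (l:ℤ)^2) : ℤ) : ℝ[X]) := by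
      rw [show -((q:ℝ)^2 - (l:ℝ)^2) = ((-(((q:ℤ))^2-(l:ℤ)^2) : ℤ) : ℝ) by push_cast; ring,
        map_intCast]
    rw [hC2]
    have hode := banded_cheb_ode (q:ℤ) l
    push_cast at hode ⊢
    linear_combination hode
  have hstep := banded_J_step he B (derivative^[l+1] (T ℝ (q:ℤ)))
  rw [hrod, mul_left_comm, banded_J_smul] at hstep
  have heq : e + 1 = (l:ℝ) + 1/2 := by rw [hedef]; ring
  rw [heq] at hstep
  linarith

lemma banded_claimD (q : ℕ) (n : ℕ) : ∀ (l : ℕ) (B : ℝ[X]), 1 ≤ l → B.natDegree ≤ n →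
    n + l + 1 ≤ q → J ((l:ℝ) - 1/2) (B * derivative^[l] (T ℝ (q:ℤ))) = 0 := by
  induction n with
  | zero =>
    intro l B hl hB hq
    have hc : ((q:ℝ)^2 - (l:ℝ)^2) ≠ 0 := by
      have h1 : (l:ℝ) < (q:ℝ) := by exact_mod_cast (by omega : l < q)
      have h2 : (0:ℝ) ≤ (l:ℝ) := Nat.cast_nonneg l
      nlinarith
    have hstep := banded_claim_step q l hl B
    have hd : derivative B = 0 := by
      rw [Polynomial.eq_C_of_natDegree_le_zero hB]; simp
    rw [hd, zero_mul, banded_J_zero] at hstep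
    exact (mul_eq_zero.mp hstep).resolve_left hc
  | succ n ih =>
    intro l B hl hB hq
    have hc : ((q:ℝ)^2 - (l:ℝ)^2) ≠ 0 := by
      have h1 : (l:ℝ) < (q:ℝ) := by exact_mod_cast (by omega : l < q)
      have h2 : (0:ℝ) ≤ (l:ℝ) := Nat.cast_nonneg l
      nlinarith
    have hstep := banded_claim_step q l hl B
    have hBd : (derivative B).natDegree ≤ n := by
      have := natDegree_derivative_le B
      omega
    have hr := ih (l+1) (derivative B) (by omega) hBd (by omega)
    rw [show ((l+1 : ℕ):ℝ) - 1/2 = (l:ℝ) + 1/2 by push_cast; ring] at hr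
    rw [hr] at hstep
    exact (mul_eq_zero.mp hstep).resolve_left hc

lemma banded_natDegree_T_le : ∀ j : ℕ, (T ℝ (j:ℤ)).natDegree ≤ j := by
  intro j
  induction j using Nat.strong_induction_on with
  | _ j ih =>
    match j with
    | 0 => simp [Polynomial.Chebyshev.T_zero]
    | 1 => simp [Polynomial.Chebyshev.T_one]
    | (j+2) =>
      rw [show ((j+2:ℕ):ℤ) = ((j:ℤ))+2 by push_cast; ring, Polynomial.Chebyshev.T_add_two]
      refine le_trans (natDegree_sub_le _ _) ?_
      have h1 : (2*X*(T ℝ ((j:ℤ)+1))).natDegree ≤ j + 2 := by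
        refine le_trans (natDegree_mul_le) ?_
        have h2 : ((2*X : ℝ[X])).natDegree ≤ 1 :=
          le_trans natDegree_mul_le (by simp)
        have h3 := ih (j+1) (by omega)
        rw [show (((j+1:ℕ)):ℤ) = ((j:ℤ))+1 by push_cast; ring] at h3
        omega
      have h4 := ih j (by omega)
      simp only [max_le_iff]
      exact ⟨h1, by omega⟩

lemma banded_J_eq (e : ℝ) (A B : ℝ[X]) :
    (∫ x in (-1:ℝ)..1, A.eval x * B.eval x * (1-x^2)^e) = J e (A*B) := by
  unfold bandedJ
  apply intervalIntegral.integral_congr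
  intro x _
  simp only [eval_mul]

end Aux

/-- The ultraspherical-coefficient representation `L` of the differential operator
`𝓛 u = Σ_{k=0}^N a^k u^{(k)}` is banded: the weighted integral
`∫ (𝓛 T_j)(x) T_{N+i}^{(N)}(x) (1-x²)^{N-1/2} dx` vanishes whenever
`i > j + m` or `i < j - 2N - m`. -/
theorem ode_operator_matrix_banded
    (N m : ℕ) (hN : 1 ≤ N) (a : Fin (N + 1) → ℝ[X])
    (ha : ∀ k, (a k).degree ≤ (m : ℕ)) (i j : ℕ)
    (hij : (i : ℤ) > (j : ℤ) + m ∨ (i : ℤ) < (j : ℤ) - 2 * N - m) :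
    ∫ x in (-1 : ℝ)..1,
      (∑ k : Fin (N + 1),
          a k * derivative^[(k : ℕ)] (Polynomial.Chebyshev.T ℝ (j : ℤ))).eval x *
        (derivative^[N] (Polynomial.Chebyshev.T ℝ ((N : ℤ) + (i : ℤ)))).eval x *
        (1 - x ^ 2) ^ ((N : ℝ) - 1 / 2) = 0 := by
  have hNr : (1:ℝ) ≤ (N:ℝ) := by exact_mod_cast hN
  have he : (0:ℝ) ≤ (N:ℝ) - 1/2 := by linarith
  have hNi : ((N:ℤ) + (i:ℤ)) = (((N+i : ℕ)):ℤ) := by push_cast; ring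
  rw [hNi, banded_J_eq]
  have hwdeg : (derivative^[N] (Polynomial.Chebyshev.T ℝ (((N+i:ℕ)):ℤ))).natDegree ≤ i := by
    refine le_trans (natDegree_iterate_derivative _ _) ?_
    have := banded_natDegree_T_le (N+i)
    omega
  rcases hij with h1 | h2
  · -- upper band: i > j + m
    have hi : j + m + 1 ≤ i := by omega
    refine banded_claimD (N+i) (j+m) N _ hN ?_ (by omega)
    apply natDegree_sum_le_of_forall_le
    intro k _
    refine le_trans natDegree_mul_le ?_
    have hak : (a k).natDegree ≤ m := natDegree_le_iff_degree_le.mpr (ha k)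
    have hT : (derivative^[(k:ℕ)] (Polynomial.Chebyshev.T ℝ (j:ℤ))).natDegree ≤ j :=
      le_trans (natDegree_iterate_derivative _ _)
        (le_trans (Nat.sub_le _ _) (banded_natDegree_T_le j))
    omega
  · -- lower band: i < j - 2N - m
    have hj : i + 2*N + m + 1 ≤ j := by omega
    rw [Finset.sum_mul, banded_J_sum he]
    refine Finset.sum_eq_zero ?_
    intro k _
    have hkN : (k:ℕ) ≤ N := by omega
    have hak : (a k).natDegree ≤ m := natDegree_le_iff_degree_le.mpr (ha k)
    have hsq : ((1-X^2 : ℝ[X])).natDegree ≤ 2 :=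
      le_trans (natDegree_sub_le _ _) (by simp)
    rcases Nat.eq_zero_or_pos (k:ℕ) with hk0 | hk1
    · -- k = 0
      rw [hk0]
      simp only [Function.iterate_zero, id_eq]
      set A := a k with hA
      set wN := derivative^[N] (Polynomial.Chebyshev.T ℝ (((N+i:ℕ)):ℤ)) with hwN
      have hode := banded_cheb_ode (j:ℤ) 0
      simp only [Function.iterate_zero, id_eq] at hode
      have hid : C ((j:ℝ)^2) * (A * (Polynomial.Chebyshev.T ℝ (j:ℤ)) * wN)
          = (A * wN * X) * derivative^[1] (Polynomial.Chebyshev.T ℝ (j:ℤ))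
            - (1-X^2) * (A * wN * derivative^[2] (Polynomial.Chebyshev.T ℝ (j:ℤ))) := by
        have hc : C ((j:ℝ)^2) = (((j:ℤ)^2 : ℤ) : ℝ[X]) := by
          rw [show ((j:ℝ)^2) = (((j:ℤ)^2 : ℤ):ℝ) by push_cast; ring, map_intCast]
        rw [hc]
        push_cast at hode ⊢
        linear_combination (A * wN) * hode
      have hthis := congrArg (bandedJ ((N:ℝ)-1/2)) hid
      rw [banded_J_smul, banded_J_sub he, banded_J_shift1 he] at hthis
      have ht1 : bandedJ ((N:ℝ)-1/2)
          ((A * wN * X) * derivative^[1] (Polynomial.Chebyshev.T ℝ (j:ℤ))) = 0 := by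
        have hsh := banded_J_shift_pow (e := (1:ℝ) - 1/2) (by norm_num) (N - 1)
          ((A * wN * X) * derivative^[1] (Polynomial.Chebyshev.T ℝ (j:ℤ)))
        rw [show (1:ℝ) - 1/2 + ((N-1:ℕ):ℝ) = (N:ℝ) - 1/2 by
          rw [Nat.cast_sub hN]; push_cast; ring] at hsh
        rw [← hsh, show (1-X^2:ℝ[X])^(N-1) * ((A * wN * X) * derivative^[1] (Polynomial.Chebyshev.T ℝ (j:ℤ)))
            = ((1-X^2)^(N-1) * (A * wN * X)) * derivative^[1] (Polynomial.Chebyshev.T ℝ (j:ℤ)) from by ring]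
        have hdeg : ((1-X^2:ℝ[X])^(N-1) * (A * wN * X)).natDegree ≤ 2*(N-1)+m+i+1 := by
          refine le_trans natDegree_mul_le ?_
          have d1 : ((1-X^2:ℝ[X])^(N-1)).natDegree ≤ 2*(N-1) := by
            refine le_trans natDegree_pow_le ?_
            calc (N-1) * (1-X^2:ℝ[X]).natDegree ≤ (N-1) * 2 := Nat.mul_le_mul le_rfl hsq
            _ = 2*(N-1) := by ring
          have d2 : (A * wN * X).natDegree ≤ m + i + 1 := by
            refine le_trans natDegree_mul_le ?_
            have := natDegree_mul_le (p := A) (q := wN)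
            have hx1 : (X:ℝ[X]).natDegree ≤ 1 := natDegree_X_le
            omega
          omega
        have hcl := banded_claimD j (2*(N-1)+m+i+1) 1
          ((1-X^2:ℝ[X])^(N-1) * (A * wN * X)) le_rfl hdeg (by omega)
        simpa using hcl
      have ht2 : bandedJ ((N:ℝ)-1/2+1)
          (A * wN * derivative^[2] (Polynomial.Chebyshev.T ℝ (j:ℤ))) = 0 := by
        have hsh := banded_J_shift_pow (e := (2:ℝ) - 1/2) (by norm_num) (N - 1)
          (A * wN * derivative^[2] (Polynomial.Chebyshev.T ℝ (j:ℤ)))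
        rw [show (2:ℝ) - 1/2 + ((N-1:ℕ):ℝ) = (N:ℝ) - 1/2 + 1 by
          rw [Nat.cast_sub hN]; push_cast; ring] at hsh
        rw [← hsh, show (1-X^2:ℝ[X])^(N-1) * (A * wN * derivative^[2] (Polynomial.Chebyshev.T ℝ (j:ℤ)))
            = ((1-X^2)^(N-1) * (A * wN)) * derivative^[2] (Polynomial.Chebyshev.T ℝ (j:ℤ)) from by ring]
        have hdeg : ((1-X^2:ℝ[X])^(N-1) * (A * wN)).natDegree ≤ 2*(N-1)+m+i := by
          refine le_trans natDegree_mul_le ?_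
          have d1 : ((1-X^2:ℝ[X])^(N-1)).natDegree ≤ 2*(N-1) := by
            refine le_trans natDegree_pow_le ?_
            calc (N-1) * (1-X^2:ℝ[X]).natDegree ≤ (N-1) * 2 := Nat.mul_le_mul le_rfl hsq
            _ = 2*(N-1) := by ring
          have := natDegree_mul_le (p := A) (q := wN)
          omega
        have hcl := banded_claimD j (2*(N-1)+m+i) 2
          ((1-X^2:ℝ[X])^(N-1) * (A * wN)) (by norm_num) hdeg (by omega)
        simpa using hcl
      rw [ht1, ht2] at hthis
      have hj2 : ((j:ℝ)^2) ≠ 0 := pow_ne_zero _ (Nat.cast_ne_zero.mpr (by omega))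
      have h0 : (j:ℝ)^2 * bandedJ ((N:ℝ)-1/2)
          (A * (Polynomial.Chebyshev.T ℝ (j:ℤ)) * wN) = 0 := by linarith
      exact (mul_eq_zero.mp h0).resolve_left hj2
    · -- k ≥ 1
      have hsh := banded_J_shift_pow (e := ((k:ℕ):ℝ) - 1/2)
        (by
          have : (1:ℝ) ≤ ((k:ℕ):ℝ) := by exact_mod_cast hk1
          linarith) (N - (k:ℕ))
        (a k * derivative^[(k:ℕ)] (Polynomial.Chebyshev.T ℝ (j:ℤ)) *
          derivative^[N] (Polynomial.Chebyshev.T ℝ (((N+i:ℕ)):ℤ)))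
      rw [show ((k:ℕ):ℝ) - 1/2 + ((N - (k:ℕ) : ℕ):ℝ) = (N:ℝ) - 1/2 by
        rw [Nat.cast_sub hkN]; ring] at hsh
      rw [← hsh, show (1-X^2:ℝ[X])^(N-(k:ℕ)) *
          (a k * derivative^[(k:ℕ)] (Polynomial.Chebyshev.T ℝ (j:ℤ)) *
            derivative^[N] (Polynomial.Chebyshev.T ℝ (((N+i:ℕ)):ℤ)))
          = ((1-X^2)^(N-(k:ℕ)) * a k * derivative^[N] (Polynomial.Chebyshev.T ℝ (((N+i:ℕ)):ℤ)))
              * derivative^[(k:ℕ)] (Polynomial.Chebyshev.T ℝ (j:ℤ)) from by ring]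
      refine banded_claimD j (2*(N-(k:ℕ))+m+i) (k:ℕ) _ hk1 ?_ (by omega)
      refine le_trans natDegree_mul_le ?_
      have d1 : ((1-X^2:ℝ[X])^(N-(k:ℕ))).natDegree ≤ 2*(N-(k:ℕ)) := by
        refine le_trans natDegree_pow_le ?_
        calc (N-(k:ℕ)) * (1-X^2:ℝ[X]).natDegree ≤ (N-(k:ℕ)) * 2 := Nat.mul_le_mul le_rfl hsq
        _ = 2*(N-(k:ℕ)) := by ring
      have d2 := natDegree_mul_le (p := (1-X^2:ℝ[X])^(N-(k:ℕ))) (q := a k)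
      omega
end

section
/- For all natural numbers N ≥ 1, l and i, if i > l, or (i : ℤ) < l − 2N, or l − i is odd, then ∫_{−1}^{1} T_l(x) · T_{N+i}^{(N)}(x) · (1 − x²)^{N − 1/2} dx = 0. In other words, T_l is weighted-orthogonal to T_{N+i}^{(N)} unless i ∈ {l, l−2, …, l−2N}. (This expresses the band structure of the composed conversion operator S_{N−1}⋯S_0 from Chebyshev coefficients to N-th ultraspherical coefficients.) -/
open Polynomial Polynomial.Chebyshev intervalIntegral

theorem cheb_ode_mul (n : ℤ) :
    (1 - (X:ℝ[X])^2) * ((1 - X^2) * derivative (derivative (T ℝ n)) - X * derivative (T ℝ n)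
      + (n:ℝ[X])^2 * T ℝ n) = 0 := by
  have A1 := one_sub_X_sq_mul_derivative_T_eq_poly_in_T (R:=ℝ) (n-1)
  have A2 := one_sub_X_sq_mul_derivative_T_eq_poly_in_T (R:=ℝ) (n-2)
  have Teq := T_eq (R:=ℝ) n
  simp only [sub_add_cancel, sub_add, show (2:ℤ)-1 = 1 from rfl] at A1 A2
  have E := congr_arg derivative A1
  simp only [derivative_mul, derivative_sub, derivative_one, derivative_X_pow, derivative_X,
    derivative_intCast, derivative_add, zero_mul, zero_add, add_zero, mul_one, zero_sub,
    Nat.cast_ofNat, map_one, pow_one] at E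
  simp only [map_ofNat, pow_one] at E
  linear_combination (norm := (push_cast; ring_nf)) (1-(X:ℝ[X])^2) * E
    + ((1:ℝ[X]) - (n:ℝ[X]))*(X:ℝ[X]) * A1 + (n:ℝ[X]) * A2 + (n:ℝ[X])*((n:ℝ[X])-1) * Teq

theorem cheb_ode (n : ℤ) :
    (1 - (X:ℝ[X])^2) * derivative (derivative (T ℝ n)) - X * derivative (T ℝ n)
      + (n:ℝ[X])^2 * T ℝ n = 0 := by
  have h := cheb_ode_mul n
  have hw : (1 - (X:ℝ[X])^2) ≠ 0 := fun hc => by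
    simpa using congr_arg (eval 0) hc
  exact (mul_eq_zero.mp h).resolve_left hw

theorem cheb_ode_iter (n : ℤ) (k : ℕ) :
    (1 - (X:ℝ[X])^2) * derivative^[k+2] (T ℝ n)
      - (2*(k:ℝ[X])+1) * X * derivative^[k+1] (T ℝ n)
      + ((n:ℝ[X])^2 - (k:ℝ[X])^2) * derivative^[k] (T ℝ n) = 0 := by
  induction k with
  | zero =>
    simpa using cheb_ode n
  | succ k ih =>
    have h := congr_arg derivative ih
    simp only [derivative_mul, derivative_sub, derivative_add, derivative_one, derivative_X_pow,
      derivative_X, derivative_intCast, derivative_natCast, derivative_ofNat, map_zero,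
      zero_mul, zero_add, add_zero, mul_one, pow_one, map_ofNat, derivative_pow,
      Nat.succ_eq_add_one, Polynomial.C_eq_natCast, Nat.cast_ofNat, mul_zero, sub_zero, zero_sub,
      ← Function.iterate_succ_apply' derivative] at h
    push_cast
    linear_combination (norm := ring_nf) h

theorem cheb_ode_eval (n : ℤ) (k : ℕ) (x : ℝ) :
    (1 - x^2) * (derivative^[k+2] (T ℝ n)).eval x
      = (2*(k:ℝ)+1) * x * (derivative^[k+1] (T ℝ n)).eval x
        - ((n:ℝ)^2 - (k:ℝ)^2) * (derivative^[k] (T ℝ n)).eval x := by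
  have h := congr_arg (eval x) (cheb_ode_iter n k)
  simp only [eval_add, eval_sub, eval_mul, eval_one, eval_pow, eval_X, eval_intCast, eval_natCast,
    eval_zero, eval_ofNat, Int.cast_natCast] at h
  push_cast at h
  linarith

theorem hasDerivAt_G (n : ℤ) (k : ℕ) (θ : ℝ) :
    HasDerivAt (fun t => Real.sin t ^ (2*k+1) * (derivative^[k+1] (T ℝ n)).eval (Real.cos t))
      (((n:ℝ)^2 - (k:ℝ)^2) * (Real.sin θ ^ (2*k) * (derivative^[k] (T ℝ n)).eval (Real.cos θ))) θ := by
  have h1 : HasDerivAt (fun t => Real.sin t ^ (2*k+1))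
      ((2*k+1 : ℕ) * Real.sin θ ^ (2*k) * Real.cos θ) θ := by
    simpa using (Real.hasDerivAt_sin θ).fun_pow (2*k+1)
  have h2 : HasDerivAt (fun t => (derivative^[k+1] (T ℝ n)).eval (Real.cos t))
      ((derivative^[k+2] (T ℝ n)).eval (Real.cos θ) * (-Real.sin θ)) θ := by
    have := (Polynomial.hasDerivAt (derivative^[k+1] (T ℝ n)) (Real.cos θ)).comp θ
      (Real.hasDerivAt_cos θ)
    simpa [Function.comp_def, ← Function.iterate_succ_apply' derivative] using this
  have h := h1.mul h2
  convert h using 1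
  · rfl
  · rfl
  · rfl
  have e := cheb_ode_eval n k (Real.cos θ)
  have s := Real.sin_sq_add_cos_sq θ
  push_cast
  linear_combination Real.sin θ^(2*k) * e
    + Real.sin θ^(2*k) * (derivative^[k+2] (T ℝ n)).eval (Real.cos θ) * s

theorem integral_cos_int (c : ℤ) (hc : c ≠ 0) :
    ∫ θ in (0:ℝ)..Real.pi, Real.cos ((c:ℝ)*θ) = 0 := by
  have hc' : (c:ℝ) ≠ 0 := Int.cast_ne_zero.mpr hc
  rw [intervalIntegral.integral_comp_mul_left (fun x => Real.cos x) hc', mul_zero,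
    integral_cos, Real.sin_zero, Real.sin_int_mul_pi, sub_zero, smul_zero]

theorem integral_cos_mul_cos_int (a b : ℤ) (h1 : a + b ≠ 0) (h2 : a - b ≠ 0) :
    ∫ θ in (0:ℝ)..Real.pi, Real.cos ((a:ℝ)*θ) * Real.cos ((b:ℝ)*θ) = 0 := by
  have key : ∀ θ:ℝ, Real.cos ((a:ℝ)*θ) * Real.cos ((b:ℝ)*θ)
      = (Real.cos (((a-b:ℤ):ℝ)*θ) + Real.cos (((a+b:ℤ):ℝ)*θ))/2 := by
    intro θ
    rw [show ((a-b:ℤ):ℝ)*θ = (a:ℝ)*θ - (b:ℝ)*θ by push_cast; ring,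
      show ((a+b:ℤ):ℝ)*θ = (a:ℝ)*θ + (b:ℝ)*θ by push_cast; ring, Real.cos_sub, Real.cos_add]
    ring
  simp_rw [key]
  rw [intervalIntegral.integral_div, intervalIntegral.integral_add
    (((by continuity : Continuous fun x:ℝ => Real.cos (((a-b:ℤ):ℝ)*x))).intervalIntegrable _ _)
    (((by continuity : Continuous fun x:ℝ => Real.cos (((a+b:ℤ):ℝ)*x))).intervalIntegrable _ _),
    integral_cos_int _ h2, integral_cos_int _ h1, add_zero, zero_div]

theorem cond_step (n k m ε : ℤ) (hε : ε = 1 ∨ ε = -1)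
    (h : n + (k+1) < |m| ∨ |m| < n - (k+1) ∨ Odd (m - n - (k+1))) :
    n + k < |m+ε| ∨ |m+ε| < n - k ∨ Odd (m + ε - n - k) := by
  simp only [Int.odd_iff] at h ⊢
  rcases abs_cases m with ⟨e1, _⟩|⟨e1, _⟩ <;> rcases abs_cases (m+ε) with ⟨e2, _⟩|⟨e2, _⟩ <;>
    omega

theorem aux_div (a θ : ℝ) : (1/(2*a)) * (Real.sin (a*θ) * a) = Real.sin (a*θ)/2 := by
  rcases eq_or_ne a 0 with h|h
  · simp [h]
  · field_simp

theorem hasDerivAt_P (m : ℤ) (θ : ℝ) :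
    HasDerivAt (fun t => (-1/(2*((m:ℝ)+1))) * Real.cos (((m:ℝ)+1)*t)
        + (1/(2*((m:ℝ)-1))) * Real.cos (((m:ℝ)-1)*t))
      (Real.cos ((m:ℝ)*θ) * Real.sin θ) θ := by
  have lin : ∀ a : ℝ, HasDerivAt (fun t:ℝ => a*t) a θ := by
    intro a; simpa using (hasDerivAt_id θ).const_mul a
  have d1 : HasDerivAt (fun t => Real.cos (((m:ℝ)+1)*t))
      (-Real.sin (((m:ℝ)+1)*θ) * ((m:ℝ)+1)) θ :=
    (Real.hasDerivAt_cos _).comp θ (lin _)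
  have d2 : HasDerivAt (fun t => Real.cos (((m:ℝ)-1)*t))
      (-Real.sin (((m:ℝ)-1)*θ) * ((m:ℝ)-1)) θ :=
    (Real.hasDerivAt_cos _).comp θ (lin _)
  have h := (d1.const_mul ((-1)/(2*((m:ℝ)+1)))).add (d2.const_mul (1/(2*((m:ℝ)-1))))
  convert h using 1
  · rfl
  · rfl
  · rfl
  have e1 := aux_div ((m:ℝ)+1) θ
  have e2 := aux_div ((m:ℝ)-1) θ
  have h3 : Real.sin (((m:ℝ)+1)*θ) = Real.sin ((m:ℝ)*θ)*Real.cos θ + Real.cos ((m:ℝ)*θ)*Real.sin θ := by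
    rw [show ((m:ℝ)+1)*θ = (m:ℝ)*θ + θ by ring, Real.sin_add]
  have h4 : Real.sin (((m:ℝ)-1)*θ) = Real.sin ((m:ℝ)*θ)*Real.cos θ - Real.cos ((m:ℝ)*θ)*Real.sin θ := by
    rw [show ((m:ℝ)-1)*θ = (m:ℝ)*θ - θ by ring, Real.sin_sub]
  linear_combination -e1 + e2 - h3/2 + h4/2

theorem Jvanish (n : ℤ) (hn : 0 ≤ n) (k : ℕ) :
    ∀ (m : ℤ), (n + (k:ℤ) < |m| ∨ |m| < n - (k:ℤ) ∨ Odd (m - n - (k:ℤ))) →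
    (∫ θ in (0:ℝ)..Real.pi,
      Real.cos ((m:ℝ)*θ) * (Real.sin θ ^ (2*k) * (derivative^[k] (T ℝ n)).eval (Real.cos θ))) = 0 := by
  induction k with
  | zero =>
    intro m hm
    have habs : m + n ≠ 0 ∧ m - n ≠ 0 := by
      simp only [Int.odd_iff] at hm
      rcases abs_cases m with ⟨e1, _⟩|⟨e1, _⟩ <;> omega
    simp only [Nat.mul_zero, pow_zero, one_mul, Function.iterate_zero, id_eq]
    have hT : ∀ θ:ℝ, (T ℝ n).eval (Real.cos θ) = Real.cos ((n:ℝ)*θ) := fun θ =>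
      Polynomial.Chebyshev.T_real_cos θ n
    simp_rw [hT]
    exact integral_cos_mul_cos_int m n habs.1 habs.2
  | succ k ih =>
    intro m hm
    set c : ℝ := (n:ℝ)^2 - (k:ℝ)^2 with hc
    set G : ℝ → ℝ := fun θ => Real.sin θ ^ (2*k+1) * (derivative^[k+1] (T ℝ n)).eval (Real.cos θ)
      with hGdef
    set H : ℝ → ℝ := fun θ => Real.sin θ ^ (2*k) * (derivative^[k] (T ℝ n)).eval (Real.cos θ)
      with hHdef
    set P : ℝ → ℝ := fun t => (-1/(2*((m:ℝ)+1))) * Real.cos (((m:ℝ)+1)*t)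
        + (1/(2*((m:ℝ)-1))) * Real.cos (((m:ℝ)-1)*t) with hPdef
    have hHcont : Continuous H :=
      (Real.continuous_sin.pow _).mul ((Polynomial.continuous _).comp Real.continuous_cos)
    have hGcont : Continuous G :=
      (Real.continuous_sin.pow _).mul ((Polynomial.continuous _).comp Real.continuous_cos)
    have hPcont : Continuous P := by
      apply Continuous.add
      · exact continuous_const.mul (Real.continuous_cos.comp (continuous_const.mul continuous_id))
      · exact continuous_const.mul (Real.continuous_cos.comp (continuous_const.mul continuous_id))
    have parts := intervalIntegral.integral_mul_deriv_eq_deriv_mul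
      (u := P) (v := G) (u' := fun θ => Real.cos ((m:ℝ)*θ) * Real.sin θ)
      (v' := fun θ => c * H θ) (a := (0:ℝ)) (b := Real.pi)
      (fun x _ => hasDerivAt_P m x) (fun x _ => hasDerivAt_G n k x)
      ((Real.continuous_cos.comp (continuous_const.mul continuous_id)).mul
        Real.continuous_sin |>.intervalIntegrable _ _)
      ((continuous_const.mul hHcont).intervalIntegrable _ _)
    have hG0 : G 0 = 0 := by simp [hGdef]
    have hGpi : G Real.pi = 0 := by simp [hGdef, Real.sin_pi]
    rw [hG0, hGpi, mul_zero, mul_zero, sub_zero, zero_sub] at parts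
    -- the target integrand equals cos(mθ)·sinθ·G θ
    have key : (∫ θ in (0:ℝ)..Real.pi,
        Real.cos ((m:ℝ)*θ) * (Real.sin θ ^ (2*(k+1)) * (derivative^[k+1] (T ℝ n)).eval (Real.cos θ)))
        = ∫ θ in (0:ℝ)..Real.pi, Real.cos ((m:ℝ)*θ) * Real.sin θ * G θ := by
      apply intervalIntegral.integral_congr
      intro θ _
      simp only [hGdef]
      ring
    beta_reduce at parts
    rw [key, show (∫ θ in (0:ℝ)..Real.pi, Real.cos ((m:ℝ)*θ) * Real.sin θ * G θ)
      = -∫ θ in (0:ℝ)..Real.pi, P θ * (c * H θ) by linarith [parts]]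
    -- now show -∫ P·(c·H) = 0, by expanding P·H into two cosine integrals
    have expand : ∀ θ:ℝ, P θ * (c * H θ)
        = (-c/(2*((m:ℝ)+1))) * (Real.cos ((((m+1):ℤ):ℝ)*θ) * H θ)
          + (c/(2*((m:ℝ)-1))) * (Real.cos ((((m-1):ℤ):ℝ)*θ) * H θ) := by
      intro θ
      simp only [hPdef]
      push_cast
      ring
    have hm' : n + ((k:ℤ)+1) < |m| ∨ |m| < n - ((k:ℤ)+1) ∨ Odd (m - n - ((k:ℤ)+1)) := by
      push_cast at hm; convert hm using 2 <;> ring_nf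
    have I1 := ih (m+1) (by have := cond_step n k m 1 (Or.inl rfl) hm'; simpa using this)
    have cond2 := cond_step n k m (-1) (Or.inr rfl) hm'
    rw [show m + -1 = m - 1 from by ring] at cond2
    have I2 := ih (m-1) cond2
    simp_rw [expand]
    have int1 : IntervalIntegrable
        (fun θ:ℝ => -c/(2*((m:ℝ)+1)) * (Real.cos ((((m+1):ℤ):ℝ)*θ) * H θ))
        MeasureTheory.volume 0 Real.pi :=
      Continuous.intervalIntegrable (continuous_const.mul
        (((Real.continuous_cos.comp (continuous_const.mul continuous_id)).mul hHcont))) _ _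
    have int2 : IntervalIntegrable
        (fun θ:ℝ => c/(2*((m:ℝ)-1)) * (Real.cos ((((m-1):ℤ):ℝ)*θ) * H θ))
        MeasureTheory.volume 0 Real.pi :=
      Continuous.intervalIntegrable (continuous_const.mul
        (((Real.continuous_cos.comp (continuous_const.mul continuous_id)).mul hHcont))) _ _
    rw [intervalIntegral.integral_add int1 int2,
      intervalIntegral.integral_const_mul, intervalIntegral.integral_const_mul, I1, I2]
    simp

/-- Band structure of the composed conversion operator from Chebyshev coefficients to
`N`-th ultraspherical coefficients: `T_l` is weighted-orthogonal to `T_{N+i}^{(N)}`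
unless `i ∈ {l, l-2, …, l-2N}`. -/
theorem chebyshev_conversion_banded
    (N l i : ℕ) (hN : 1 ≤ N)
    (h : i > l ∨ (i : ℤ) < (l : ℤ) - 2 * N ∨ Odd ((l : ℤ) - (i : ℤ))) :
    ∫ x in (-1 : ℝ)..1,
      (Polynomial.Chebyshev.T ℝ (l : ℤ)).eval x *
        (derivative^[N] (Polynomial.Chebyshev.T ℝ ((N : ℤ) + (i : ℤ)))).eval x *
        (1 - x ^ 2) ^ ((N : ℝ) - 1 / 2) = 0 := by
  obtain ⟨N', rfl⟩ : ∃ N', N = N' + 1 := ⟨N - 1, by omega⟩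
  set n : ℤ := ((N' + 1 : ℕ) : ℤ) + (i : ℤ) with hn_def
  set p : ℝ[X] := derivative^[N' + 1] (T ℝ n) with hp_def
  set F : ℝ → ℝ := fun x => (T ℝ (l:ℤ)).eval x * p.eval x *
    (1 - x ^ 2) ^ (((N' + 1 : ℕ) : ℝ) - 1 / 2) with hF_def
  have hc : (0:ℝ) < ((N' + 1 : ℕ) : ℝ) - 1/2 := by push_cast; linarith [Nat.cast_nonneg (α := ℝ) N']
  have hr : Continuous fun y:ℝ => y ^ (((N' + 1 : ℕ) : ℝ) - 1/2) :=
    continuous_iff_continuousAt.2 fun y => Real.continuousAt_rpow_const y _ (Or.inr hc.le)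
  have hFcont : Continuous F :=
    ((Polynomial.continuous _).mul (Polynomial.continuous _)).mul
      (hr.comp (by continuity))
  have sub := intervalIntegral.integral_comp_smul_deriv (a := (0:ℝ)) (b := Real.pi)
    (f := Real.cos) (f' := fun θ => -Real.sin θ) (g := F)
    (fun x _ => Real.hasDerivAt_cos x) (Real.continuous_sin.neg.continuousOn) hFcont
  rw [Real.cos_zero, Real.cos_pi] at sub
  have A : (∫ x in (1:ℝ)..(-1), F x) = -∫ x in (-1:ℝ)..1, F x :=
    intervalIntegral.integral_symm _ _
  have B : (∫ θ in (0:ℝ)..Real.pi, (fun θ => -Real.sin θ) θ • (F ∘ Real.cos) θ)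
      = -∫ θ in (0:ℝ)..Real.pi, Real.sin θ * F (Real.cos θ) := by
    simp only [smul_eq_mul, Function.comp_apply, neg_mul]
    exact intervalIntegral.integral_neg
  rw [B, A] at sub
  have h1 : (∫ x in (-1:ℝ)..1, F x) = ∫ θ in (0:ℝ)..Real.pi, Real.sin θ * F (Real.cos θ) := by
    linarith
  show (∫ x in (-1:ℝ)..1, F x) = 0
  rw [h1]
  have key : ∀ θ ∈ Set.uIcc (0:ℝ) Real.pi,
      Real.sin θ * F (Real.cos θ)
      = Real.cos (((l:ℤ):ℝ)*θ) * (Real.sin θ ^ (2*(N'+1)) * p.eval (Real.cos θ)) := by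
    intro θ hθ
    have hθ' : θ ∈ Set.Icc (0:ℝ) Real.pi := by
      rwa [Set.uIcc_of_le Real.pi_pos.le] at hθ
    have hs : 0 ≤ Real.sin θ := Real.sin_nonneg_of_nonneg_of_le_pi hθ'.1 hθ'.2
    have e1 : (1:ℝ) - Real.cos θ ^ 2 = Real.sin θ ^ 2 := by
      have := Real.sin_sq_add_cos_sq θ; linarith
    have e2 : (Real.sin θ ^ 2) ^ (((N' + 1 : ℕ) : ℝ) - 1/2)
        = Real.sin θ ^ (2*N' + 1) := by
      rw [← Real.rpow_natCast (Real.sin θ) 2, ← Real.rpow_mul hs,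
        ← Real.rpow_natCast (Real.sin θ) (2*N'+1)]
      congr 1
      push_cast
      ring
    simp only [hF_def, e1, e2]
    rw [Polynomial.Chebyshev.T_real_cos θ (l:ℤ)]
    ring
  rw [intervalIntegral.integral_congr key]
  apply Jvanish n (by positivity) (N'+1) (l:ℤ)
  have habs : |(l:ℤ)| = (l:ℤ) := abs_of_nonneg (by positivity)
  push_cast
  simp only [Int.odd_iff] at h ⊢
  omega
end

section
/- Let k ≥ 1 and m be natural numbers and let a be a real polynomial with deg a ≤ m. Then for every natural number j, the polynomial a · T_{k+j}^{(k)} lies in the real linear span of the set { T_{k+i}^{(k)} : i a natural number with j − m ≤ (i : ℤ) ≤ j + m }. (Since T_{k+i}^{(k)} is a nonzero scalar multiple of the ultraspherical polynomial C_i^{(k)}, this says that the multiplication operator 𝓜_k[a] acting on k-th ultraspherical coefficients is banded with lower and upper bandwidths (m, m), which is the bandwidth assertion of the paper's Lemma 3.1.) -/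
open Polynomial

namespace UltraAux

noncomputable def Tk (k : ℕ) (n : ℤ) : ℝ[X] :=
  derivative^[k] (Polynomial.Chebyshev.T ℝ n)

lemma natDegree_T_le : ∀ n : ℕ, (Chebyshev.T ℝ (n : ℤ)).natDegree ≤ n
  | 0 => by simp [Chebyshev.T_zero]
  | 1 => by simpa [Chebyshev.T_one] using natDegree_X_le
  | (n + 2) => by
    have h1 := natDegree_T_le n
    have h2 := natDegree_T_le (n + 1)
    have : ((n + 2 : ℕ) : ℤ) = ((n : ℕ) : ℤ) + 2 := by push_cast; ring
    rw [this, Chebyshev.T_add_two]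
    refine le_trans (natDegree_sub_le _ _) ?_
    refine max_le ?_ (h1.trans (by omega))
    refine le_trans (natDegree_mul_le) ?_
    have : (2 * X : ℝ[X]).natDegree ≤ 1 := by
      refine le_trans natDegree_mul_le ?_
      simp
    push_cast at h2
    omega

lemma Tk_zero_of_lt {k n : ℕ} (h : n < k) : Tk k (n : ℤ) = 0 :=
  iterate_derivative_eq_zero (lt_of_le_of_lt (natDegree_T_le n) h)

lemma two_T (n : ℤ) :
    2 * Chebyshev.T ℝ n = Chebyshev.U ℝ n - Chebyshev.U ℝ (n - 2) := by
  linear_combination 2 * Chebyshev.T_eq_U_sub_X_mul_U ℝ n + Chebyshev.U_eq ℝ n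

lemma base (n : ℤ) :
    ((n : ℝ[X]) - 1) * derivative (Chebyshev.T ℝ (n + 1))
      - ((n : ℝ[X]) + 1) * derivative (Chebyshev.T ℝ (n - 1))
      = (2 * ((n : ℝ[X]) ^ 2 - 1)) * Chebyshev.T ℝ n := by
  rw [Chebyshev.T_derivative_eq_U, Chebyshev.T_derivative_eq_U]
  push_cast
  have h := two_T n
  have : n + 1 - 1 = n := by ring
  rw [this]
  have : n - 1 - 1 = n - 2 := by ring
  rw [this]
  linear_combination (-((n : ℝ[X]) ^ 2 - 1)) * h

lemma intCast_eq_C (z : ℤ) : ((z : ℝ[X])) = C ((z : ℝ)) := by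
  simp

lemma iter (k : ℕ) (n : ℤ) :
    ((n : ℝ[X]) - 1) * Tk (k + 1) (n + 1) - ((n : ℝ[X]) + 1) * Tk (k + 1) (n - 1)
      = (2 * ((n : ℝ[X]) ^ 2 - 1)) * Tk k n := by
  have h := congrArg (derivative^[k]) (base n)
  have e1 : ((n : ℝ[X]) - 1) = C ((n : ℝ) - 1) := by push_cast; simp
  have e2 : ((n : ℝ[X]) + 1) = C ((n : ℝ) + 1) := by push_cast; simp
  have e3 : (2 * ((n : ℝ[X]) ^ 2 - 1)) = C (2 * ((n : ℝ) ^ 2 - 1)) := by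
    rw [map_mul, map_sub, map_pow, map_ofNat, map_one, map_intCast]
  rw [e1, e2, e3] at h ⊢
  rw [iterate_derivative_sub, iterate_derivative_C_mul, iterate_derivative_C_mul,
    iterate_derivative_C_mul] at h
  simpa [Tk, Function.iterate_succ_apply] using h

lemma iterD_add (k : ℕ) (p q : ℝ[X]) :
    derivative^[k] (p + q) = derivative^[k] p + derivative^[k] q := by
  induction k generalizing p q with
  | zero => simp
  | succ k ih => simp [Function.iterate_succ_apply, derivative_add, ih]

lemma leibniz (k : ℕ) (p : ℝ[X]) :
    derivative^[k + 1] (X * p)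
      = X * derivative^[k + 1] p + ((k : ℝ[X]) + 1) * derivative^[k] p := by
  induction k generalizing p with
  | zero =>
    simp [derivative_mul]
    ring
  | succ k ih =>
    rw [Function.iterate_succ_apply (f := derivative) (n := k + 1)]
    rw [derivative_mul, derivative_X, one_mul]
    rw [iterD_add, ih]
    simp only [Function.iterate_succ_apply]
    push_cast
    ring

lemma h1eq (k : ℕ) (n : ℤ) :
    2 * (X * Tk (k + 1) n) + (2 * ((k : ℝ[X]) + 1)) * Tk k n
      = Tk (k + 1) (n + 1) + Tk (k + 1) (n - 1) := by
  have h := congrArg (derivative^[k + 1]) (Chebyshev.T_add_one ℝ n)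
  rw [show (2 * X * Chebyshev.T ℝ n : ℝ[X]) = C 2 * (X * Chebyshev.T ℝ n) by
      rw [map_ofNat]; ring] at h
  rw [iterate_derivative_sub, iterate_derivative_C_mul, leibniz] at h
  have h2 : (C 2 : ℝ[X]) = 2 := map_ofNat C 2
  rw [Tk, Tk, Tk, Tk]
  rw [h2] at h
  linear_combination -h


lemma keymem (k : ℕ) (hk : 1 ≤ k) (n : ℤ) (hn : 1 ≤ n) :
    (X : ℝ[X]) * Tk k n ∈ Submodule.span ℝ {Tk k (n + 1), Tk k (n - 1)} := by
  obtain ⟨k', rfl⟩ : ∃ k', k = k' + 1 := ⟨k - 1, by omega⟩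
  rcases eq_or_lt_of_le hn with h1 | h2
  · -- n = 1
    subst h1
    rcases Nat.eq_zero_or_pos k' with hk0 | hk1
    · subst hk0
      have hA : Tk 1 (1 : ℤ) = 1 := by
        simp [Tk, Chebyshev.T_one]
      have hB : Tk 1 ((1 : ℤ) + 1) = (4 : ℝ) • X := by
        have h12 : ((1 : ℤ) + 1) = 2 := by norm_num
        rw [Tk, h12, show Chebyshev.T ℝ 2 = 2 * X ^ 2 - 1 from Chebyshev.T_two ℝ]
        simp [smul_eq_C_mul]
        norm_num [map_ofNat]
        ring
      have : (X : ℝ[X]) * Tk 1 (1 : ℤ) = (4⁻¹ : ℝ) • Tk 1 ((1:ℤ) + 1) := by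
        rw [hA, hB, mul_one, smul_smul]
        norm_num
      rw [this]
      exact Submodule.smul_mem _ _ (Submodule.subset_span (Set.mem_insert _ _))
    · have hA : Tk (k' + 1) (1 : ℤ) = 0 := by
        rw [Tk, Chebyshev.T_one]
        exact iterate_derivative_X (by omega)
      rw [hA, mul_zero]
      exact Submodule.zero_mem _
  · -- n ≥ 2
    have h2n : (2 : ℤ) ≤ n := h2
    have h1' := h1eq k' n
    have h2' := iter k' n
    have hcomb : (2 * ((n : ℝ[X]) ^ 2 - 1)) * (X * Tk (k' + 1) n)
        = (((n : ℝ[X]) ^ 2 - 1) - ((k' : ℝ[X]) + 1) * ((n : ℝ[X]) - 1)) * Tk (k' + 1) (n + 1)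
          + (((n : ℝ[X]) ^ 2 - 1) + ((k' : ℝ[X]) + 1) * ((n : ℝ[X]) + 1)) * Tk (k' + 1) (n - 1) := by
      linear_combination ((n : ℝ[X]) ^ 2 - 1) * h1' + ((k' : ℝ[X]) + 1) * h2'
    set e : ℝ := 2 * ((n : ℝ) ^ 2 - 1) with he_def
    set f : ℝ := ((n : ℝ) ^ 2 - 1) - ((k' : ℝ) + 1) * ((n : ℝ) - 1) with hf_def
    set g : ℝ := ((n : ℝ) ^ 2 - 1) + ((k' : ℝ) + 1) * ((n : ℝ) + 1) with hg_def
    have he : e ≠ 0 := by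
      have : (2 : ℝ) ≤ (n : ℝ) := by exact_mod_cast h2n
      have : (4 : ℝ) ≤ (n : ℝ) ^ 2 := by nlinarith
      rw [he_def]
      nlinarith
    have hce : (C e : ℝ[X]) = 2 * ((n : ℝ[X]) ^ 2 - 1) := by
      rw [he_def]
      simp only [map_mul, map_sub, map_pow, map_ofNat, map_one, map_intCast]
    have hcf : (C f : ℝ[X]) = ((n : ℝ[X]) ^ 2 - 1) - ((k' : ℝ[X]) + 1) * ((n : ℝ[X]) - 1) := by
      rw [hf_def]
      simp only [map_mul, map_sub, map_add, map_pow, map_one, map_intCast, map_natCast]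
    have hcg : (C g : ℝ[X]) = ((n : ℝ[X]) ^ 2 - 1) + ((k' : ℝ[X]) + 1) * ((n : ℝ[X]) + 1) := by
      rw [hg_def]
      simp only [map_mul, map_sub, map_add, map_pow, map_one, map_intCast, map_natCast]
    have hsm : e • ((X : ℝ[X]) * Tk (k' + 1) n) = f • Tk (k' + 1) (n + 1) + g • Tk (k' + 1) (n - 1) := by
      rw [smul_eq_C_mul, smul_eq_C_mul, smul_eq_C_mul, hce, hcf, hcg]
      exact hcomb
    have hxa : (X : ℝ[X]) * Tk (k' + 1) n
        = (e⁻¹ * f) • Tk (k' + 1) (n + 1) + (e⁻¹ * g) • Tk (k' + 1) (n - 1) := by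
      calc (X : ℝ[X]) * Tk (k' + 1) n = e⁻¹ • (e • ((X : ℝ[X]) * Tk (k' + 1) n)) :=
            (inv_smul_smul₀ he _).symm
        _ = _ := by rw [hsm, smul_add, smul_smul, smul_smul]
    rw [hxa]
    exact Submodule.add_mem _
      (Submodule.smul_mem _ _ (Submodule.subset_span (Set.mem_insert _ _)))
      (Submodule.smul_mem _ _ (Submodule.subset_span (Set.mem_insert_of_mem _ rfl)))

lemma mono (k : ℕ) (hk : 1 ≤ k) (j : ℕ) : ∀ t : ℕ,
    (X : ℝ[X]) ^ t * Tk k ((k : ℤ) + (j : ℤ)) ∈ Submodule.span ℝ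
      { q : ℝ[X] | ∃ i : ℕ, (j : ℤ) - t ≤ (i : ℤ) ∧ (i : ℤ) ≤ (j : ℤ) + t ∧
          q = Tk k ((k : ℤ) + (i : ℤ)) }
  | 0 => by
    rw [pow_zero, one_mul]
    exact Submodule.subset_span ⟨j, by simp, by simp, rfl⟩
  | (t + 1) => by
    have ih := mono k hk j t
    have hmul : (X : ℝ[X]) ^ (t + 1) * Tk k ((k : ℤ) + (j : ℤ))
        = X * ((X : ℝ[X]) ^ t * Tk k ((k : ℤ) + (j : ℤ))) := by ring
    rw [hmul]
    refine Submodule.span_induction (p := fun x _ => (X : ℝ[X]) * x ∈ Submodule.span ℝ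
      { q : ℝ[X] | ∃ i : ℕ, (j : ℤ) - (t + 1 : ℕ) ≤ (i : ℤ) ∧ (i : ℤ) ≤ (j : ℤ) + (t + 1 : ℕ) ∧
          q = Tk k ((k : ℤ) + (i : ℤ)) }) ?_ ?_ ?_ ?_ ih
    · rintro x ⟨i, hi1, hi2, rfl⟩
      have hmem := keymem k hk ((k : ℤ) + i) (by push_cast; omega)
      refine Submodule.span_le.mpr ?_ hmem
      rintro q hq
      rcases hq with hq | hq
      · -- q = Tk k (k + i + 1)
        rw [hq]
        refine Submodule.subset_span ⟨i + 1, by push_cast; omega, by push_cast; omega, ?_⟩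
        congr 1 <;> (push_cast; ring)
      · -- q = Tk k (k + i - 1)
        simp only [Set.mem_singleton_iff] at hq
        rw [hq]
        rcases Nat.eq_zero_or_pos i with hi0 | hipos
        · subst hi0
          have : Tk k ((k : ℤ) + (0 : ℕ) - 1) = 0 := by
            have hcast : ((k : ℤ) + ((0 : ℕ) : ℤ) - 1) = (((k - 1 : ℕ) : ℕ) : ℤ) := by
              push_cast; omega
            rw [hcast]
            exact Tk_zero_of_lt (by omega)
          rw [this]
          exact Submodule.zero_mem _
        · obtain ⟨i', rfl⟩ : ∃ i', i = i' + 1 := ⟨i - 1, by omega⟩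
          refine Submodule.subset_span ⟨i', by push_cast at hi1 ⊢; omega,
            by push_cast at hi2 ⊢; omega, ?_⟩
          congr 1 <;> (push_cast; ring)
    · simp
    · intro x y _ _ hx hy
      rw [mul_add]
      exact Submodule.add_mem _ hx hy
    · intro a x _ hx
      rw [mul_smul_comm]
      exact Submodule.smul_mem _ _ hx

end UltraAux

open UltraAux

/-- The multiplication operator `𝓜_k[a]` acting on `k`-th ultraspherical coefficients is
banded with bandwidths `(m, m)`: for `deg a ≤ m`, the product `a · T_{k+j}^{(k)}` lies in
the span of the `T_{k+i}^{(k)}` with `j - m ≤ i ≤ j + m`. -/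
theorem ultraspherical_multiplication_banded
    (k m : ℕ) (hk : 1 ≤ k) (a : ℝ[X]) (ha : a.degree ≤ (m : ℕ)) (j : ℕ) :
    a * derivative^[k] (Polynomial.Chebyshev.T ℝ ((k : ℤ) + (j : ℤ))) ∈
      Submodule.span ℝ
        { q : ℝ[X] | ∃ i : ℕ, (j : ℤ) - m ≤ (i : ℤ) ∧ (i : ℤ) ≤ (j : ℤ) + m ∧
            q = derivative^[k] (Polynomial.Chebyshev.T ℝ ((k : ℤ) + (i : ℤ))) } := by

  have hnd : a.natDegree < m + 1 := by
    have := Polynomial.natDegree_le_iff_degree_le.mpr ha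
    omega
  rw [Polynomial.as_sum_range' a (m + 1) hnd, Finset.sum_mul]
  refine Submodule.sum_mem _ ?_
  intro t ht
  have htm : t ≤ m := by
    simp only [Finset.mem_range] at ht
    omega
  rw [← C_mul_X_pow_eq_monomial, mul_assoc, ← smul_eq_C_mul]
  refine Submodule.smul_mem _ _ ?_
  have h := mono k hk j t
  refine Submodule.span_le.mpr ?_ h
  rintro q ⟨i, hi1, hi2, rfl⟩
  exact Submodule.subset_span ⟨i, by omega, by omega, rfl⟩
end

section
/- Let m be a natural number and a₀, …, a_m real numbers, and let a(x) = Σ_{j=0}^{m} a_j · T_j(x); extend the coefficients by a_j := 0 for j < 0 or j > m. Then for every natural number k, a(x) · U_k(x) = Σ_{i=0}^{k+m} ½ · (a_{i−k} + a_{k−i} − a_{i+k+2}) · U_i(x). (This is the Toeplitz-minus-Hankel structure of the multiplication operator 𝓜₁[a] acting on Chebyshev-U coefficients, equation (3.2) of the paper.) -/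
open Polynomial Finset Polynomial.Chebyshev

lemma two_T_mul_U (j k : ℤ) :
    2 * Chebyshev.T ℝ j * Chebyshev.U ℝ k = Chebyshev.U ℝ (k + j) + Chebyshev.U ℝ (k - j) := by
  induction j using Polynomial.Chebyshev.induct with
  | zero => simp [Chebyshev.T_zero]; ring
  | one => rw [Chebyshev.T_one]; linear_combination -Chebyshev.U_sub_one ℝ k
  | add_two n ih1 ih2 =>
      have h1 := Chebyshev.T_add_two ℝ (n : ℤ)
      have h2 := Chebyshev.U_add_two ℝ (k + n)
      have h3 := Chebyshev.U_sub_two ℝ (k - n)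
      linear_combination (norm := ring_nf)
        2 * Chebyshev.U ℝ k * h1 + 2 * X * ih1 - ih2 - h2 - h3
  | neg_add_one n ih1 ih2 =>
      have h1 := Chebyshev.T_add_two ℝ ((-n : ℤ) - 1)
      have hA := Chebyshev.U_add_two ℝ (k + n - 1)
      have hB := Chebyshev.U_sub_two ℝ (k - n + 1)
      linear_combination (norm := ring_nf)
        2 * Chebyshev.U ℝ k * h1 + 2 * X * ih1 - ih2 - hA - hB

lemma half_smul (p : ℝ[X]) : (1/2:ℝ) • (2 * p) = p := by
  rw [smul_eq_C_mul, ← mul_assoc, show ((2:ℝ[X]) = Polynomial.C 2) from (map_ofNat Polynomial.C 2).symm, ← Polynomial.C_mul]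
  norm_num

lemma T_mul_U_key (j k : ℤ) :
    Chebyshev.T ℝ j * Chebyshev.U ℝ k
      = (1/2:ℝ) • Chebyshev.U ℝ (k + j) + (1/2:ℝ) • Chebyshev.U ℝ (k - j) := by
  rw [← smul_add, ← two_T_mul_U j k, mul_assoc, half_smul]

/-- Toeplitz-minus-Hankel structure of the multiplication operator `𝓜₁[a]` acting on
Chebyshev-`U` coefficients: if `a(x) = Σ_{j=0}^m a_j T_j(x)` (with `a_j = 0` for `j < 0`
or `j > m`), then `a(x) U_k(x) = Σ_{i=0}^{k+m} ½ (a_{i-k} + a_{k-i} - a_{i+k+2}) U_i(x)`. -/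
theorem chebyshevU_multiplication_toeplitz_hankel
    (m : ℕ) (a : ℤ → ℝ) (ha : ∀ j : ℤ, j < 0 ∨ (m : ℤ) < j → a j = 0) (k : ℕ) :
    (∑ j ∈ Finset.range (m + 1), a j • Polynomial.Chebyshev.T ℝ (j : ℤ)) *
        Polynomial.Chebyshev.U ℝ (k : ℤ)
      = ∑ i ∈ Finset.range (k + m + 1),
          ((1 / 2 : ℝ) * (a ((i : ℤ) - k) + a ((k : ℤ) - i) - a ((i : ℤ) + k + 2))) •
            Polynomial.Chebyshev.U ℝ (i : ℤ) := by
  rw [Finset.sum_mul]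
  have hterm : ∀ j ∈ range (m+1), a j • Chebyshev.T ℝ (j:ℤ) * Chebyshev.U ℝ (k:ℤ)
      = ((1/2:ℝ) * a j) • Chebyshev.U ℝ ((k:ℤ)+j)
        + ((1/2:ℝ) * a j) • Chebyshev.U ℝ ((k:ℤ)-j) := by
    intro j _
    rw [smul_mul_assoc, T_mul_U_key, smul_add, smul_smul, smul_smul,
      mul_comm (a (j:ℤ)) (1/2:ℝ)]
  rw [Finset.sum_congr rfl hterm, Finset.sum_add_distrib]
  have hr : ∀ i ∈ range (k+m+1),
      ((1 / 2 : ℝ) * (a ((i : ℤ) - k) + a ((k : ℤ) - i) - a ((i : ℤ) + k + 2))) •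
          Chebyshev.U ℝ (i : ℤ)
        = ((1/2:ℝ) * a ((i:ℤ)-k)) • Chebyshev.U ℝ (i:ℤ)
          + ((1/2:ℝ) * a ((k:ℤ)-i)) • Chebyshev.U ℝ (i:ℤ)
          - ((1/2:ℝ) * a ((i:ℤ)+k+2)) • Chebyshev.U ℝ (i:ℤ) := by
    intro i _
    rw [← add_smul, ← sub_smul]
    congr 1
    ring
  rw [Finset.sum_congr rfl hr, Finset.sum_sub_distrib, Finset.sum_add_distrib]
  -- e1 : Toeplitz part 1
  have e1 : (∑ i ∈ range (k+m+1), ((1/2:ℝ) * a ((i:ℤ)-k)) • Chebyshev.U ℝ (i:ℤ))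
      = ∑ j ∈ range (m+1), ((1/2:ℝ) * a j) • Chebyshev.U ℝ ((k:ℤ)+j) := by
    rw [show k+m+1 = k+(m+1) by omega, Finset.sum_range_add]
    rw [Finset.sum_eq_zero (fun i hi => by
      rw [ha ((i:ℤ)-k) (Or.inl (by simp at hi; omega))]
      simp)]
    rw [zero_add]
    refine Finset.sum_congr rfl fun i _ => ?_
    have h1 : ((k+i : ℕ) : ℤ) - (k:ℤ) = (i:ℤ) := by push_cast; ring
    have h2 : ((k+i : ℕ) : ℤ) = (k:ℤ) + i := by push_cast; ring
    rw [h1, h2]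
  -- B simplification
  have hBeq : (∑ i ∈ range (k+m+1), ((1/2:ℝ) * a ((k:ℤ)-i)) • Chebyshev.U ℝ (i:ℤ))
      = ∑ j ∈ range (k+1), ((1/2:ℝ) * a (j:ℤ)) • Chebyshev.U ℝ ((k:ℤ)-j) := by
    rw [← Finset.sum_subset (Finset.range_subset_range.2 (by omega : k+1 ≤ k+m+1))
      (fun i _ hi => by
        rw [ha ((k:ℤ)-i) (Or.inl (by simp at hi; omega))]
        simp)]
    rw [← Finset.sum_range_reflect (fun i => ((1/2:ℝ) * a ((k:ℤ)-i)) • Chebyshev.U ℝ (i:ℤ)) (k+1)]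
    refine Finset.sum_congr rfl fun j hj => ?_
    simp only [mem_range] at hj
    have hc : (k:ℤ) - ((k+1-1-j : ℕ) : ℤ) = (j:ℤ) := by omega
    have hu : ((k+1-1-j : ℕ) : ℤ) = (k:ℤ) - j := by omega
    rw [hc, hu]
  rw [hBeq]
  -- now split cases on m ≤ k
  by_cases hmk : m ≤ k
  · have hC : (∑ i ∈ range (k+m+1), ((1/2:ℝ) * a ((i:ℤ)+k+2)) • Chebyshev.U ℝ (i:ℤ)) = 0 := by
      apply Finset.sum_eq_zero
      intro i _
      rw [ha ((i:ℤ)+k+2) (Or.inr (by omega))]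
      simp
    have hS2B : (∑ j ∈ range (k+1), ((1/2:ℝ) * a (j:ℤ)) • Chebyshev.U ℝ ((k:ℤ)-j))
        = ∑ j ∈ range (m+1), ((1/2:ℝ) * a (j:ℤ)) • Chebyshev.U ℝ ((k:ℤ)-j) := by
      rw [← Finset.sum_subset (Finset.range_subset_range.2 (by omega : m+1 ≤ k+1))
        (fun j _ hj => by
          rw [ha (j:ℤ) (Or.inr (by simp at hj; omega))]
          simp)]
    rw [hC, hS2B, ← e1, sub_zero]
  · push_neg at hmk
    -- C reduces to a small range
    have hC : (∑ i ∈ range (k+m+1), ((1/2:ℝ) * a ((i:ℤ)+k+2)) • Chebyshev.U ℝ (i:ℤ))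
        = ∑ i ∈ range (m-k-1), ((1/2:ℝ) * a ((i:ℤ)+k+2)) • Chebyshev.U ℝ (i:ℤ) := by
      rw [← Finset.sum_subset (Finset.range_subset_range.2 (by omega : m-k-1 ≤ k+m+1))
        (fun i _ hi => by
          rw [ha ((i:ℤ)+k+2) (Or.inr (by simp at hi; omega))]
          simp)]
    -- split S2
    have hsplit : (∑ j ∈ range (m+1), ((1/2:ℝ) * a (j:ℤ)) • Chebyshev.U ℝ ((k:ℤ)-j))
        = (∑ j ∈ range (k+1), ((1/2:ℝ) * a (j:ℤ)) • Chebyshev.U ℝ ((k:ℤ)-j))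
          + ∑ j ∈ Finset.Ico (k+1) (m+1), ((1/2:ℝ) * a (j:ℤ)) • Chebyshev.U ℝ ((k:ℤ)-j) := by
      rw [Finset.range_eq_Ico,
        ← Finset.sum_Ico_consecutive _ (by omega : 0 ≤ k+1) (by omega : k+1 ≤ m+1)]
      rw [← Finset.range_eq_Ico]
    have hIco : (∑ j ∈ Finset.Ico (k+1) (m+1), ((1/2:ℝ) * a (j:ℤ)) • Chebyshev.U ℝ ((k:ℤ)-j))
        = -∑ i ∈ range (m-k-1), ((1/2:ℝ) * a ((i:ℤ)+k+2)) • Chebyshev.U ℝ (i:ℤ) := by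
      rw [Finset.sum_Ico_eq_sum_range]
      have hmk1 : m+1-(k+1) = (m-k-1)+1 := by omega
      rw [hmk1, Finset.sum_range_succ']
      have h0 : ((1/2:ℝ) * a ((k+1+0 : ℕ):ℤ)) • Chebyshev.U ℝ ((k:ℤ)-((k+1+0:ℕ):ℤ)) = 0 := by
        have : ((k:ℤ)-((k+1+0:ℕ):ℤ)) = -1 := by push_cast; ring
        rw [this, Chebyshev.U_neg_one]
        simp
      rw [h0, add_zero, ← Finset.sum_neg_distrib]
      refine Finset.sum_congr rfl fun i _ => ?_
      have h1 : ((k:ℤ)-((k+1+(i+1):ℕ):ℤ)) = -(i:ℤ)-2 := by push_cast; ring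
      have h2 : ((k+1+(i+1) : ℕ) : ℤ) = (i:ℤ)+k+2 := by push_cast; ring
      rw [h1, h2, Chebyshev.U_neg_sub_two, smul_neg]
    rw [hC, hsplit, hIco, ← e1]
    ring
end
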